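/- arXiv:0910.5560 — 5 statements merged into one kernel-verified Lean document; each statement's English description precedes it below -/
import Mathlib

section
/- The modular group is of divergence type at its critical exponent δ = 1: for all z, w in the hyperbolic upper half-plane ℍ, the Poincaré series ∑_{g ∈ SL(2,ℤ)} e^{−d(z, g·w)} diverges (i.e., the family (e^{−d(z,g·w)})_{g ∈ SL(2,ℤ)} is not summable). -/
open Real UpperHalfPlane Matrix

namespace ModularDivergenceAux

instance fact_prime (p : Nat.Primes) : Fact (Nat.Prime (p : ℕ)) := ⟨p.2⟩
instance primes_neZero (p : Nat.Primes) : NeZero (p : ℕ) := ⟨p.2.ne_zero⟩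

/-- `cosh` of the hyperbolic distance from `i` to `g • i` is half the sum of the
squares of the entries of `g`. -/
lemma cosh_dist_I_smul (g : Matrix.SpecialLinearGroup (Fin 2) ℤ) :
    Real.cosh (dist (I : ℍ) (g • I)) =
      ((g 0 0 : ℝ)^2 + (g 0 1 : ℝ)^2 + (g 1 0 : ℝ)^2 + (g 1 1 : ℝ)^2) / 2 := by
  have hdet : (g 0 0 : ℝ) * g 1 1 - g 0 1 * g 1 0 = 1 := by
    have := g.det_coe
    rw [Matrix.det_fin_two] at this
    exact_mod_cast congrArg (Int.cast : ℤ → ℝ) this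
  set a := (g 0 0 : ℝ); set b := (g 0 1 : ℝ); set c := (g 1 0 : ℝ); set d := (g 1 1 : ℝ)
  have hD : 0 < c^2 + d^2 := by
    rcases eq_or_ne c 0 with hc | hc
    · rcases eq_or_ne d 0 with hd | hd
      · rw [hc, hd] at hdet; simp at hdet
      · positivity
    · positivity
  have hcd : (c : ℂ) * Complex.I + (d : ℂ) ≠ 0 := by
    intro h
    have him := congrArg Complex.im h
    have hre := congrArg Complex.re h
    simp at him hre
    rw [him, hre] at hD
    simp at hD
  rw [UpperHalfPlane.specialLinearGroup_apply]
  rw [UpperHalfPlane.cosh_dist]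
  simp only [UpperHalfPlane.coe_mk, UpperHalfPlane.coe_I, UpperHalfPlane.mk_im]
  rw [show ((I:ℍ).im) = 1 from rfl]
  rw [Complex.dist_eq, Complex.sq_norm]
  have key : ((a:ℂ) * Complex.I + b) / (c * Complex.I + d)
      = Complex.mk ((a*c+b*d)/(c^2+d^2)) (1/(c^2+d^2)) := by
    rw [div_eq_iff hcd]
    apply Complex.ext <;>
      simp [Complex.add_re, Complex.add_im, Complex.mul_re, Complex.mul_im] <;>
      field_simp <;>
      first
        | linear_combination c * hdet
        | linear_combination (-c) * hdet
        | linear_combination d * hdet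
        | linear_combination (-d) * hdet
  simp only [algebraMap_int_eq, eq_intCast]
  rw [key]
  simp only [Complex.normSq_apply, Complex.sub_re, Complex.sub_im, Complex.I_re, Complex.I_im]
  have e1 : (a*c+b*d)^2 = (a^2+b^2)*(c^2+d^2) - 1 := by
    linear_combination (-(a*d - b*c + 1)) * hdet
  have hD' : c^2 + d^2 ≠ 0 := ne_of_gt hD
  field_simp
  first
    | linear_combination e1
    | linear_combination 2*e1
    | linear_combination (c^2+d^2)*e1
    | linear_combination 2*(c^2+d^2)*e1
    | linear_combination (c^2+d^2)^2*e1

/-- For a prime `p` and a unit `u` of `ZMod p`, an element of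
`SL(2, ℤ)` with lower-left entry `p` and entries bounded by `p`. -/
noncomputable def mat (p : Nat.Primes) (u : (ZMod (p : ℕ))ˣ) :
    Matrix.SpecialLinearGroup (Fin 2) ℤ :=
  ⟨!![((u : ZMod (p:ℕ)).val : ℤ),
      (((u : ZMod (p:ℕ)).val : ℤ) * (((u⁻¹ : (ZMod (p:ℕ))ˣ) : ZMod (p:ℕ)).val : ℤ) - 1) / (p : ℤ);
      ((p : ℕ) : ℤ), (((u⁻¹ : (ZMod (p:ℕ))ˣ) : ZMod (p:ℕ)).val : ℤ)], by
    have hdvd : ((p:ℕ) : ℤ) ∣ ((u : ZMod (p:ℕ)).val : ℤ) * (((u⁻¹ : (ZMod (p:ℕ))ˣ) : ZMod (p:ℕ)).val : ℤ) - 1 := by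
      rw [← ZMod.intCast_zmod_eq_zero_iff_dvd]
      push_cast
      rw [ZMod.natCast_val, ZMod.natCast_val, ZMod.cast_id, ZMod.cast_id,
        mul_inv_cancel₀ (Units.ne_zero u), sub_self]
    rw [Matrix.det_fin_two_of, Int.ediv_mul_cancel hdvd]; ring⟩

lemma mat_00 (p : Nat.Primes) (u : (ZMod (p : ℕ))ˣ) :
    mat p u 0 0 = ((u : ZMod (p:ℕ)).val : ℤ) := by
  unfold mat; rw [Matrix.SpecialLinearGroup.coe_mk]; rfl

lemma mat_10 (p : Nat.Primes) (u : (ZMod (p : ℕ))ˣ) :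
    mat p u 1 0 = ((p : ℕ) : ℤ) := by
  unfold mat; rw [Matrix.SpecialLinearGroup.coe_mk]; rfl

lemma mat_11 (p : Nat.Primes) (u : (ZMod (p : ℕ))ˣ) :
    mat p u 1 1 = (((u⁻¹ : (ZMod (p:ℕ))ˣ) : ZMod (p:ℕ)).val : ℤ) := by
  unfold mat; rw [Matrix.SpecialLinearGroup.coe_mk]; rfl

lemma mat_01 (p : Nat.Primes) (u : (ZMod (p : ℕ))ˣ) :
    mat p u 0 1 = (((u : ZMod (p:ℕ)).val : ℤ) * (((u⁻¹ : (ZMod (p:ℕ))ˣ) : ZMod (p:ℕ)).val : ℤ) - 1) / ((p:ℕ) : ℤ) := by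
  unfold mat; rw [Matrix.SpecialLinearGroup.coe_mk]; rfl

lemma quad_bound (P A D : ℤ) (hP : 2 ≤ P) (hA0 : 0 ≤ A) (hA : A < P)
    (hD0 : 0 ≤ D) (hD : D < P) (hdvd : P ∣ A * D - 1) :
    A^2 + ((A*D-1)/P)^2 + P^2 + D^2 ≤ 4 * P^2 := by
  have hAD : 1 ≤ A * D := by
    by_contra h
    push_neg at h
    have h0 : 0 ≤ A * D := mul_nonneg hA0 hD0
    have h1 : A * D = 0 := by omega
    rw [h1] at hdvd
    have : P ∣ 1 := (dvd_neg).1 (by simpa using hdvd)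
    have := Int.le_of_dvd one_pos this
    omega
  have hBval : (A * D - 1) / P * P = A * D - 1 := Int.ediv_mul_cancel hdvd
  have hB0 : 0 ≤ (A * D - 1) / P := Int.ediv_nonneg (by omega) (by omega)
  have hBlt : (A * D - 1) / P < P := by
    apply Int.ediv_lt_of_lt_mul (by omega)
    nlinarith
  nlinarith

lemma mat_entries_bound (p : Nat.Primes) (u : (ZMod (p : ℕ))ˣ) :
    (mat p u 0 0)^2 + (mat p u 0 1)^2 + (mat p u 1 0)^2 + (mat p u 1 1)^2
      ≤ 4 * ((p:ℕ) : ℤ)^2 := by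
  have hdvd : ((p:ℕ) : ℤ) ∣ ((u : ZMod (p:ℕ)).val : ℤ) * (((u⁻¹ : (ZMod (p:ℕ))ˣ) : ZMod (p:ℕ)).val : ℤ) - 1 := by
    rw [← ZMod.intCast_zmod_eq_zero_iff_dvd]
    push_cast
    rw [ZMod.natCast_val, ZMod.natCast_val, ZMod.cast_id, ZMod.cast_id,
      mul_inv_cancel₀ (Units.ne_zero u), sub_self]
  rw [mat_00, mat_01, mat_10, mat_11]
  apply quad_bound
  · exact_mod_cast p.2.two_le
  · exact Int.natCast_nonneg _
  · exact_mod_cast ZMod.val_lt (u : ZMod (p:ℕ))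
  · exact Int.natCast_nonneg _
  · exact_mod_cast ZMod.val_lt ((u⁻¹ : (ZMod (p:ℕ))ˣ) : ZMod (p:ℕ))
  · exact hdvd

lemma term_bound (p : Nat.Primes) (u : (ZMod (p : ℕ))ˣ) :
    1/(4*((p:ℕ):ℝ)^2) ≤ Real.exp (-(dist (I : ℍ) (mat p u • I))) := by
  set dd := dist (I : ℍ) (mat p u • I) with hdd
  have hcosh : Real.cosh dd ≤ 2*((p:ℕ):ℝ)^2 := by
    rw [hdd, cosh_dist_I_smul]
    have h := mat_entries_bound p u
    have h' : ((mat p u 0 0 : ℤ):ℝ)^2 + ((mat p u 0 1 : ℤ):ℝ)^2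
        + ((mat p u 1 0 : ℤ):ℝ)^2 + ((mat p u 1 1 : ℤ):ℝ)^2 ≤ 4 * ((p:ℕ):ℝ)^2 := by
      exact_mod_cast h
    linarith
  have hcoshpos : 0 < Real.cosh dd := Real.cosh_pos _
  have hkey : 1 ≤ Real.exp (-dd) * (2 * Real.cosh dd) := by
    rw [Real.cosh_eq]
    have h1 : Real.exp (-dd) * Real.exp dd = 1 := by
      rw [← Real.exp_add]; simp
    nlinarith [sq_nonneg (Real.exp (-dd)), Real.exp_pos (-dd)]
  have hp0 : (0:ℝ) < ((p:ℕ):ℝ) := by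
    have : (2:ℝ) ≤ ((p:ℕ):ℝ) := by exact_mod_cast p.2.two_le
    linarith
  calc 1/(4*((p:ℕ):ℝ)^2) ≤ 1/(2 * Real.cosh dd) := by
        apply one_div_le_one_div_of_le
        · positivity
        · linarith
    _ ≤ Real.exp (-dd) := by
        rw [div_le_iff₀ (by positivity)]
        linarith

end ModularDivergenceAux

open ModularDivergenceAux

/-- The modular group is of divergence type at its critical exponent `δ = 1`:
for all `z, w` in the hyperbolic upper half-plane, the Poincaré series
`∑_{g ∈ SL(2,ℤ)} e^{-d(z, g w)}` diverges. -/
theorem modular_poincare_series_diverges_at_one (z w : UpperHalfPlane) :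
    ¬ Summable (fun g : Matrix.SpecialLinearGroup (Fin 2) ℤ =>
      Real.exp (-(dist z (g • w)))) := by
  intro h
  have hiso : ∀ (g : Matrix.SpecialLinearGroup (Fin 2) ℤ) (x y : ℍ),
      dist (g • x) (g • y) = dist x y := fun g x y =>
    dist_smul (Matrix.SpecialLinearGroup.map (algebraMap ℤ ℝ) g) x y
  -- reduce to the basepoint `i`
  have h2 : Summable (fun g : Matrix.SpecialLinearGroup (Fin 2) ℤ =>
      Real.exp (-(dist (I : ℍ) (g • I)))) := by
    apply Summable.of_nonneg_of_le (fun g => (Real.exp_pos _).le)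
      (fun g => ?_) (h.mul_left (Real.exp (dist (I : ℍ) z + dist w (I : ℍ))))
    rw [← Real.exp_add]
    apply Real.exp_le_exp.2
    have t4 : dist z (g • w) ≤ dist z (I : ℍ) + dist (I : ℍ) (g • I) + dist (g • I) (g • w) :=
      dist_triangle4 _ _ _ _
    rw [hiso g I w, dist_comm z (I : ℍ), dist_comm (I : ℍ) w] at t4
    linarith
  -- restrict along the injective family `mat`
  have hF : Function.Injective
      (fun x : Σ p : Nat.Primes, (ZMod (p : ℕ))ˣ => mat x.1 x.2) := by
    rintro ⟨p, u⟩ ⟨q, v⟩ hEq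
    simp only at hEq
    have h10 : mat p u 1 0 = mat q v 1 0 := by rw [hEq]
    rw [mat_10, mat_10] at h10
    have hpq : p = q := Subtype.ext (by exact_mod_cast h10)
    subst hpq
    have h00 : mat p u 0 0 = mat p v 0 0 := by rw [hEq]
    rw [mat_00, mat_00] at h00
    have hval : (u : ZMod (p:ℕ)).val = (v : ZMod (p:ℕ)).val := by exact_mod_cast h00
    have huv : (u : ZMod (p:ℕ)) = (v : ZMod (p:ℕ)) := ZMod.val_injective _ hval
    exact congrArg (fun t => (⟨p, t⟩ : Σ p : Nat.Primes, (ZMod (p : ℕ))ˣ)) (Units.ext huv)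
  have h3 : Summable (fun x : Σ p : Nat.Primes, (ZMod (p : ℕ))ˣ =>
      Real.exp (-(dist (I : ℍ) (mat x.1 x.2 • I)))) := h2.comp_injective hF
  have h4 : Summable (fun p : Nat.Primes =>
      ∑' u : (ZMod (p : ℕ))ˣ, Real.exp (-(dist (I : ℍ) (mat p u • I)))) := h3.sigma
  -- compare with the sum of the reciprocals of the primes
  have h5 : Summable (fun p : Nat.Primes => 1/(8*((p:ℕ):ℝ))) := by
    apply Summable.of_nonneg_of_le (fun p => by positivity) (fun p => ?_) h4
    rw [tsum_fintype]
    have hcard : Fintype.card (ZMod (p:ℕ))ˣ = (p:ℕ) - 1 := ZMod.card_units _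
    have hle : (Finset.univ.card : ℕ) • (1/(4*((p:ℕ):ℝ)^2))
        ≤ ∑ u : (ZMod (p:ℕ))ˣ, Real.exp (-(dist (I : ℍ) (mat p u • I))) :=
      Finset.card_nsmul_le_sum _ _ _ (fun u _ => term_bound p u)
    rw [Finset.card_univ, hcard, nsmul_eq_mul] at hle
    have hp2 : (2:ℝ) ≤ ((p:ℕ):ℝ) := by exact_mod_cast p.2.two_le
    have hcast : (((p:ℕ) - 1 : ℕ) : ℝ) = ((p:ℕ):ℝ) - 1 := by
      rw [Nat.cast_sub p.2.one_lt.le]; norm_num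
    rw [hcast] at hle
    refine le_trans ?_ hle
    rw [mul_one_div, div_le_div_iff₀ (by positivity) (by positivity)]
    nlinarith
  -- contradiction with the divergence of `∑ 1/p`
  apply Nat.Primes.not_summable_one_div
  have h6 := h5.mul_left 8
  apply h6.congr
  intro p
  have hp0 : ((p:ℕ):ℝ) ≠ 0 := by
    have : (2:ℝ) ≤ ((p:ℕ):ℝ) := by exact_mod_cast p.2.two_le
    linarith
  field_simp
end

section
/- For every real s > 1 and all z, w in the hyperbolic upper half-plane ℍ, the Poincaré series of the modular group converges: the family (e^{−s·d(z, g·w)})_{g ∈ SL(2,ℤ)} is summable. (Together with divergence at s = 1, this shows the exponent of convergence of SL(2,ℤ) equals 1.) -/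
open Real UpperHalfPlane

private lemma poincare_aux_L0 {s : ℝ} (hs : 1 < s) :
    Summable (fun j : ℤ => (1 + (j:ℝ)^2) ^ (-s)) := by
  have hb : Summable (fun j : ℤ => (1/(j:ℝ)^2) + (if j = 0 then (1:ℝ) else 0)) := by
    apply Summable.add
    · exact (Real.summable_one_div_int_pow.mpr one_lt_two)
    · apply summable_of_finite_support
      apply Set.Finite.subset (Set.finite_singleton (0:ℤ))
      intro j hj
      simp only [Function.mem_support] at hj
      by_contra h
      simp at h
      rw [if_neg h] at hj
      exact hj rfl
  apply Summable.of_nonneg_of_le (fun j => Real.rpow_nonneg (by positivity) _) _ hb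
  intro j
  by_cases h : j = 0
  · subst h; simp
  · rw [if_neg h, add_zero]
    have h1 : (1:ℝ) ≤ 1 + (j:ℝ)^2 := by nlinarith [sq_nonneg (j:ℝ)]
    have h2 : (1 + (j:ℝ)^2) ^ (-s) ≤ (1 + (j:ℝ)^2) ^ (-1 : ℝ) :=
      Real.rpow_le_rpow_of_exponent_le h1 (by linarith)
    refine h2.trans ?_
    rw [Real.rpow_neg_one, one_div]
    apply inv_anti₀
    · have : (j:ℝ) ≠ 0 := Int.cast_ne_zero.mpr h
      positivity
    · linarith

private lemma poincare_aux_key_ineq {θ x : ℝ} (h0 : 0 ≤ θ) (h1 : θ ≤ 1) :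
    (1 + x^2)/4 ≤ 1 + (θ + x)^2 := by
  nlinarith [sq_nonneg (x + 4*θ/3), sq_nonneg θ]

private lemma poincare_aux_L1 {s : ℝ} (hs : 1 < s) (α : ℝ) :
    Summable (fun m : ℤ => (1 + (α + (m:ℝ))^2) ^ (-s)) ∧
    ∑' m : ℤ, (1 + (α + (m:ℝ))^2) ^ (-s) ≤ 4^s * ∑' j : ℤ, (1 + (j:ℝ)^2) ^ (-s) := by
  set n : ℤ := ⌊α⌋ with hn
  set θ : ℝ := α - n with hθ
  have hθ0 : 0 ≤ θ := by rw [hθ]; have := Int.floor_le α; linarith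
  have hθ1 : θ ≤ 1 := by rw [hθ]; have := Int.lt_floor_add_one α; linarith
  set f : ℤ → ℝ := fun m => (1 + (α + (m:ℝ))^2) ^ (-s) with hf
  set e : ℤ ≃ ℤ := Equiv.addRight n with he
  have hcomp : ∀ j : ℤ, f (e.symm j) = (1 + (θ + (j:ℝ))^2) ^ (-s) := by
    intro j
    simp only [hf, he, Equiv.addRight_symm_apply]
    push_cast
    rw [hθ]; ring_nf
  have hkey : ∀ j : ℤ, (1 + (θ + (j:ℝ))^2) ^ (-s) ≤ 4^s * (1 + (j:ℝ)^2) ^ (-s) := by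
    intro j
    have h4 : (0:ℝ) < (1 + (j:ℝ)^2)/4 := by positivity
    calc (1 + (θ + (j:ℝ))^2) ^ (-s) ≤ ((1 + (j:ℝ)^2)/4) ^ (-s) :=
          Real.rpow_le_rpow_of_nonpos h4 (poincare_aux_key_ineq hθ0 hθ1) (by linarith)
      _ = 4^s * (1 + (j:ℝ)^2) ^ (-s) := by
          rw [Real.div_rpow (by positivity) (by norm_num), Real.rpow_neg (by norm_num : (0:ℝ) ≤ 4)]
          rw [div_inv_eq_mul]; ring
  have hbs : Summable (fun j : ℤ => 4^s * (1 + (j:ℝ)^2) ^ (-s)) := (poincare_aux_L0 hs).mul_left _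
  have hsum' : Summable (fun j : ℤ => f (e.symm j)) := by
    apply Summable.of_nonneg_of_le (fun j => by rw [hcomp]; positivity) _ hbs
    intro j; rw [hcomp]; exact hkey j
  have hsum : Summable f := e.symm.summable_iff.mp hsum'
  refine ⟨hsum, ?_⟩
  have heq : ∑' m : ℤ, f m = ∑' j : ℤ, f (e.symm j) := (e.symm.tsum_eq f).symm
  rw [show ∑' m : ℤ, (1 + (α + (m:ℝ))^2) ^ (-s) = ∑' m : ℤ, f m from rfl, heq]
  calc ∑' j : ℤ, f (e.symm j) ≤ ∑' j : ℤ, 4^s * (1 + (j:ℝ)^2) ^ (-s) :=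
        Summable.tsum_le_tsum (fun j => by rw [hcomp]; exact hkey j) hsum' hbs
    _ = 4^s * ∑' j : ℤ, (1 + (j:ℝ)^2) ^ (-s) := tsum_mul_left

private lemma poincare_aux_L2 {s : ℝ} (hs : 1 < s) :
    Summable (fun u : ℤ × ℤ => ((u.1:ℝ)^2 + (u.2:ℝ)^2) ^ (-s)) := by
  have h2s : (2:ℝ) < 2*s := by linarith
  have hE := EisensteinSeries.summable_one_div_norm_rpow h2s
  rw [← (finTwoArrowEquiv ℤ).summable_iff]
  apply Summable.of_nonneg_of_le (fun x => Real.rpow_nonneg (by positivity) _) _ hE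
  intro x
  show (((x 0 : ℤ):ℝ)^2 + ((x 1 : ℤ):ℝ)^2) ^ (-s) ≤ ‖x‖ ^ (-(2*s))
  by_cases hx : x = 0
  · subst hx
    simp only [Pi.zero_apply, Int.cast_zero, norm_zero]
    rw [show ((0:ℝ)^2 + (0:ℝ)^2) = 0 by ring, Real.zero_rpow (by linarith),
      Real.zero_rpow (by linarith)]
  · have hnx : 0 < ‖x‖ := norm_pos_iff.mpr hx
    have hle : ‖x‖^2 ≤ (x 0 : ℝ)^2 + (x 1 : ℝ)^2 := by
      rw [EisensteinSeries.norm_eq_max_natAbs]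
      have h0 : ((x 0).natAbs : ℝ)^2 = (x 0 : ℝ)^2 := by
        rw [Nat.cast_natAbs]; push_cast; rw [sq_abs]
      have h1 : ((x 1).natAbs : ℝ)^2 = (x 1 : ℝ)^2 := by
        rw [Nat.cast_natAbs]; push_cast; rw [sq_abs]
      rcases le_total ((x 0).natAbs) ((x 1).natAbs) with h | h
      · rw [max_eq_right h]
        nlinarith [sq_nonneg ((x 0 : ℝ))]
      · rw [max_eq_left h]
        nlinarith [sq_nonneg ((x 1 : ℝ))]
    calc ((x 0 : ℝ)^2 + (x 1 : ℝ)^2) ^ (-s) ≤ (‖x‖^2) ^ (-s) :=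
          Real.rpow_le_rpow_of_nonpos (by positivity) hle (by linarith)
      _ = ‖x‖ ^ (-(2*s)) := by
          rw [← Real.rpow_natCast ‖x‖ 2, ← Real.rpow_mul (norm_nonneg x)]
          rw [show ((2:ℕ):ℝ) * -s = -(2*s) by push_cast; ring]

private lemma poincare_aux_cosh (g : Matrix.SpecialLinearGroup (Fin 2) ℤ) :
    Real.cosh (dist UpperHalfPlane.I (g • UpperHalfPlane.I)) =
      ((g 0 0 : ℝ)^2 + (g 0 1)^2 + (g 1 0)^2 + (g 1 1)^2) / 2 := by
  set a : ℝ := (g 0 0 : ℝ) with ha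
  set b : ℝ := (g 0 1 : ℝ) with hb
  set c : ℝ := (g 1 0 : ℝ) with hcc
  set d : ℝ := (g 1 1 : ℝ) with hd
  have hdet : a * d - b * c = 1 := by
    have h := g.2
    rw [Matrix.det_fin_two] at h
    rw [ha, hb, hcc, hd]
    exact_mod_cast congrArg (Int.cast : ℤ → ℝ) h
  have hc : (↑(g • UpperHalfPlane.I) : ℂ) = ((a:ℂ) * Complex.I + b) / ((c:ℂ) * Complex.I + d) := by
    rw [UpperHalfPlane.coe_specialLinearGroup_apply]; rfl
  have hcd : c^2 + d^2 ≠ 0 := by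
    intro h
    have hc0 : c = 0 := by nlinarith
    have hd0 : d = 0 := by nlinarith
    rw [hc0, hd0] at hdet; simp at hdet
  have hnsd : Complex.normSq ((c:ℂ) * Complex.I + d) = c^2 + d^2 := by
    simp [Complex.normSq_apply]; ring
  have hden : ((c:ℂ) * Complex.I + d) ≠ 0 := by
    intro h
    apply hcd
    have := congrArg Complex.normSq h
    rwa [hnsd, map_zero] at this
  have him : (g • UpperHalfPlane.I).im = 1 / (c^2 + d^2) := by
    rw [ModularGroup.im_smul_eq_div_normSq]
    rw [show UpperHalfPlane.denom (↑g) UpperHalfPlane.I = ((c:ℂ) * Complex.I + d) from rfl, hnsd]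
    simp [UpperHalfPlane.I_im]
  have hdist : dist (UpperHalfPlane.I : ℂ) (↑(g • UpperHalfPlane.I) : ℂ) ^ 2
      = ((b+c)^2 + (d-a)^2) / (c^2+d^2) := by
    rw [Complex.dist_eq, Complex.sq_norm, hc]
    rw [show (UpperHalfPlane.I : ℂ) = Complex.I from rfl]
    rw [show Complex.I - ((a:ℂ) * Complex.I + b) / ((c:ℂ) * Complex.I + d)
        = (Complex.I * ((c:ℂ) * Complex.I + d) - ((a:ℂ) * Complex.I + b)) / ((c:ℂ) * Complex.I + d)
      by rw [sub_div, mul_div_cancel_right₀ _ hden]]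
    rw [Complex.normSq_div, hnsd]
    congr 1
    rw [show Complex.I * ((c:ℂ) * Complex.I + d) - ((a:ℂ) * Complex.I + b)
        = (-(b+c) : ℝ) + ((d-a : ℝ)) * Complex.I by
        push_cast; linear_combination (c:ℂ) * Complex.I_sq]
    rw [Complex.normSq_add_mul_I]
    ring
  rw [UpperHalfPlane.cosh_dist, hdist, him, UpperHalfPlane.I_im]
  field_simp
  nlinarith [hdet]

set_option maxHeartbeats 1600000 in
/-- For every real `s > 1` and all `z, w` in the hyperbolic upper half-plane,
the Poincaré series of the modular group converges: the family
`(e^{-s d(z, g w)})_{g ∈ SL(2,ℤ)}` is summable. -/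
theorem modular_poincare_series_summable_of_one_lt (s : ℝ) (hs : 1 < s)
    (z w : UpperHalfPlane) :
    Summable (fun g : Matrix.SpecialLinearGroup (Fin 2) ℤ =>
      Real.exp (-(s * dist z (g • w)))) := by
  classical
  -- base point reduction constant
  set E1 : ℝ := Real.exp (s * (dist UpperHalfPlane.I z + dist w UpperHalfPlane.I)) with hE1
  have hs0 : (0:ℝ) ≤ s := by linarith
  -- integer data
  set b₀ : ℤ × ℤ → ℤ := fun u => -(Int.gcdB u.1 u.2) with hb₀
  set d₀ : ℤ × ℤ → ℤ := fun u => Int.gcdA u.1 u.2 with hd₀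
  set k₀ : ℤ × ℤ → ℤ := fun u => u.1 * b₀ u + u.2 * d₀ u with hk₀
  -- the dominating function on (ℤ×ℤ)×ℤ
  set F : (ℤ × ℤ) × ℤ → ℝ := fun p =>
    (((p.1.1:ℝ)^2 + (p.1.2:ℝ)^2) +
      ((k₀ p.1 : ℝ) + (p.2:ℝ) * ((p.1.1:ℝ)^2 + (p.1.2:ℝ)^2))^2 /
        ((p.1.1:ℝ)^2 + (p.1.2:ℝ)^2)) ^ (-s) with hF
  have hFnonneg : ∀ p, 0 ≤ F p := by
    intro p
    apply Real.rpow_nonneg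
    positivity
  -- summability of F
  have hC0 : 0 ≤ ∑' j : ℤ, (1 + (j:ℝ)^2) ^ (-s) :=
    tsum_nonneg (fun j => Real.rpow_nonneg (by positivity) _)
  have hFsum : Summable F := by
    rw [summable_prod_of_nonneg hFnonneg]
    constructor
    · intro u
      by_cases hu : ((u.1:ℝ)^2 + (u.2:ℝ)^2) = 0
      · apply summable_of_finite_support
        apply Set.Finite.subset (Set.finite_empty)
        intro m hm
        exfalso
        apply hm
        simp only [hF, hu]
        rw [div_zero, add_zero, Real.zero_rpow (by linarith)]
      · have hQ : (0:ℝ) < ((u.1:ℝ)^2 + (u.2:ℝ)^2) := by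
          rcases lt_or_eq_of_le (by positivity : (0:ℝ) ≤ ((u.1:ℝ)^2 + (u.2:ℝ)^2)) with h | h
          · exact h
          · exact absurd h.symm hu
        have hrw : ∀ m : ℤ, F (u, m) =
            ((u.1:ℝ)^2 + (u.2:ℝ)^2) ^ (-s) *
              (1 + ((k₀ u : ℝ)/((u.1:ℝ)^2 + (u.2:ℝ)^2) + (m:ℝ))^2) ^ (-s) := by
          intro m
          have hbase : ((u.1:ℝ)^2 + (u.2:ℝ)^2) +
              ((k₀ u : ℝ) + (m:ℝ) * ((u.1:ℝ)^2 + (u.2:ℝ)^2))^2 / ((u.1:ℝ)^2 + (u.2:ℝ)^2)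
              = ((u.1:ℝ)^2 + (u.2:ℝ)^2) *
                (1 + ((k₀ u : ℝ)/((u.1:ℝ)^2 + (u.2:ℝ)^2) + (m:ℝ))^2) := by
            field_simp
          rw [hF]
          show (((u.1:ℝ)^2 + (u.2:ℝ)^2) +
              ((k₀ u : ℝ) + (m:ℝ) * ((u.1:ℝ)^2 + (u.2:ℝ)^2))^2 / ((u.1:ℝ)^2 + (u.2:ℝ)^2)) ^ (-s) = _
          rw [hbase, Real.mul_rpow (le_of_lt hQ) (by positivity)]
        apply Summable.congr _ (fun m => (hrw m).symm)
        exact ((poincare_aux_L1 hs _).1.mul_left _)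
    · -- the tsum over m, dominated by const * Q^(-s)
      set C := 4^s * ∑' j : ℤ, (1 + (j:ℝ)^2) ^ (-s) with hC
      have hCnn : 0 ≤ C := by
        rw [hC]; apply mul_nonneg (Real.rpow_nonneg (by norm_num) _) hC0
      have hdom : ∀ u : ℤ × ℤ, ∑' m : ℤ, F (u, m) ≤ C * ((u.1:ℝ)^2 + (u.2:ℝ)^2) ^ (-s) := ?_
      case _ =>
        exact Summable.of_nonneg_of_le
          (fun u => tsum_nonneg (fun m => hFnonneg (u, m))) hdom
          ((poincare_aux_L2 hs).mul_left C)
      intro u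
      by_cases hu : ((u.1:ℝ)^2 + (u.2:ℝ)^2) = 0
      · have hz : ∀ m : ℤ, F (u, m) = 0 := by
          intro m
          simp only [hF, hu]
          rw [div_zero, add_zero, Real.zero_rpow (by linarith)]
        rw [tsum_congr hz, tsum_zero]
        positivity
      · have hQ : (0:ℝ) < ((u.1:ℝ)^2 + (u.2:ℝ)^2) := by
          rcases lt_or_eq_of_le (by positivity : (0:ℝ) ≤ ((u.1:ℝ)^2 + (u.2:ℝ)^2)) with h | h
          · exact h
          · exact absurd h.symm hu
        set Q : ℝ := ((u.1:ℝ)^2 + (u.2:ℝ)^2) with hQdef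
        set α : ℝ := (k₀ u : ℝ)/Q with hα
        have hrw : ∀ m : ℤ, F (u, m) = Q ^ (-s) * (1 + (α + (m:ℝ))^2) ^ (-s) := by
          intro m
          have hbase : Q + ((k₀ u : ℝ) + (m:ℝ) * Q)^2 / Q = Q * (1 + (α + (m:ℝ))^2) := by
            rw [hα]
            field_simp
          rw [hF]
          show (Q + ((k₀ u : ℝ) + (m:ℝ) * Q)^2 / Q) ^ (-s) = _
          rw [hbase, Real.mul_rpow (le_of_lt hQ) (by positivity)]
        rw [tsum_congr hrw, tsum_mul_left]
        have := (poincare_aux_L1 hs α).2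
        calc Q ^ (-s) * ∑' m : ℤ, (1 + (α + (m:ℝ))^2) ^ (-s)
            ≤ Q ^ (-s) * C := by
              apply mul_le_mul_of_nonneg_left _ (Real.rpow_nonneg (le_of_lt hQ) _)
              rw [hC]; exact this
          _ = C * Q ^ (-s) := mul_comm _ _
  -- the injection
  set ι : Matrix.SpecialLinearGroup (Fin 2) ℤ → (ℤ × ℤ) × ℤ := fun g =>
    ((g 0 0, g 1 0),
      (g 0 1 - b₀ (g 0 0, g 1 0)) * d₀ (g 0 0, g 1 0)
        - (g 1 1 - d₀ (g 0 0, g 1 0)) * b₀ (g 0 0, g 1 0)) with hι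
  -- facts about entries
  have hdetZ : ∀ g : Matrix.SpecialLinearGroup (Fin 2) ℤ, g 0 0 * g 1 1 - g 0 1 * g 1 0 = 1 := by
    intro g
    have h := g.2
    rwa [Matrix.det_fin_two] at h
  have hcop : ∀ g : Matrix.SpecialLinearGroup (Fin 2) ℤ, g 0 0 * d₀ (g 0 0, g 1 0) - g 1 0 * b₀ (g 0 0, g 1 0) = 1 := by
    intro g
    have hgcd : Int.gcd (g 0 0) (g 1 0) = 1 := by
      rw [← Int.isCoprime_iff_gcd_eq_one]
      exact ⟨g 1 1, -(g 0 1), by linear_combination hdetZ g⟩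
    have := Int.gcd_eq_gcd_ab (g 0 0) (g 1 0)
    simp only [hb₀, hd₀]
    rw [hgcd] at this
    push_cast at this
    linarith
  -- key relation : k₀ + m*q = a*b + c*d
  have hκ : ∀ g : Matrix.SpecialLinearGroup (Fin 2) ℤ,
      g 0 0 * g 0 1 + g 1 0 * g 1 1 =
        k₀ ((ι g).1) + (ι g).2 * ((g 0 0)^2 + (g 1 0)^2) := by
    intro g
    have h1 := hdetZ g
    have h2 := hcop g
    simp only [hι, hk₀]
    linear_combination (g 1 0 * d₀ (g 0 0, g 1 0) + g 0 0 * b₀ (g 0 0, g 1 0)) * h1 +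
      (-(g 0 0 * g 0 1 + g 1 0 * g 1 1 - g 0 0 * b₀ (g 0 0, g 1 0) - g 1 0 * d₀ (g 0 0, g 1 0))
        - (g 1 0 * d₀ (g 0 0, g 1 0) + g 0 0 * b₀ (g 0 0, g 1 0))) * h2
  -- injectivity
  have hqne : ∀ g : Matrix.SpecialLinearGroup (Fin 2) ℤ, (g 0 0)^2 + (g 1 0)^2 ≠ 0 := by
    intro g h
    have h1 : g 0 0 = 0 := by nlinarith [sq_nonneg (g 0 0), sq_nonneg (g 1 0)]
    have h2 : g 1 0 = 0 := by nlinarith [sq_nonneg (g 0 0), sq_nonneg (g 1 0)]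
    have := hdetZ g
    rw [h1, h2] at this
    simp at this
  have hB : ∀ g : Matrix.SpecialLinearGroup (Fin 2) ℤ, ((g 0 0)^2 + (g 1 0)^2) * g 0 1
      = (g 0 0 * g 0 1 + g 1 0 * g 1 1) * g 0 0 - g 1 0 := by
    intro g; linear_combination (-(g 1 0)) * hdetZ g
  have hD : ∀ g : Matrix.SpecialLinearGroup (Fin 2) ℤ, ((g 0 0)^2 + (g 1 0)^2) * g 1 1
      = (g 0 0 * g 0 1 + g 1 0 * g 1 1) * g 1 0 + g 0 0 := by
    intro g; linear_combination (g 0 0) * hdetZ g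
  have hinj : Function.Injective ι := by
    intro g g' h
    have hac : g 0 0 = g' 0 0 ∧ g 1 0 = g' 1 0 := by
      have h1 := congrArg Prod.fst h
      exact ⟨congrArg Prod.fst h1, congrArg Prod.snd h1⟩
    obtain ⟨ha, hc⟩ := hac
    have hKeq : g 0 0 * g 0 1 + g 1 0 * g 1 1 = g' 0 0 * g' 0 1 + g' 1 0 * g' 1 1 := by
      have e1 := hκ g
      have e2 := hκ g'
      rw [e1, e2, h, ha, hc]
    have hq := hqne g
    have hBeq : g 0 1 = g' 0 1 := by
      have e1 := hB g
      have e2 := hB g'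
      rw [← hKeq, ← ha, ← hc] at e2
      exact mul_left_cancel₀ hq (e1.trans e2.symm)
    have hDeq : g 1 1 = g' 1 1 := by
      have e1 := hD g
      have e2 := hD g'
      rw [← hKeq, ← ha, ← hc] at e2
      exact mul_left_cancel₀ hq (e1.trans e2.symm)
    apply Subtype.ext
    ext i j
    fin_cases i <;> fin_cases j <;> assumption
  -- pointwise bound
  have hbound : ∀ g : Matrix.SpecialLinearGroup (Fin 2) ℤ,
      Real.exp (-(s * dist z (g • w))) ≤ (E1 * 2^s) * F (ι g) := by
    intro g
    set a : ℝ := (g 0 0 : ℝ) with hadef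
    set b : ℝ := (g 0 1 : ℝ) with hbdef
    set c : ℝ := (g 1 0 : ℝ) with hcdef
    set d : ℝ := (g 1 1 : ℝ) with hddef
    set Dg : ℝ := dist UpperHalfPlane.I (g • UpperHalfPlane.I) with hDg
    have htri : Dg ≤ dist UpperHalfPlane.I z + dist z (g • w) + dist w UpperHalfPlane.I := by
      have t1 : Dg ≤ dist UpperHalfPlane.I z + dist z (g • UpperHalfPlane.I) := dist_triangle _ _ _
      have t2 : dist z (g • UpperHalfPlane.I)
          ≤ dist z (g • w) + dist (g • w) (g • UpperHalfPlane.I) := dist_triangle _ _ _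
      have t3 : dist (g • w) (g • UpperHalfPlane.I) = dist w UpperHalfPlane.I := by
        have e1 : g • w = ((g : Matrix.SpecialLinearGroup (Fin 2) ℝ)) • w := rfl
        have e2 : g • UpperHalfPlane.I
            = ((g : Matrix.SpecialLinearGroup (Fin 2) ℝ)) • UpperHalfPlane.I := rfl
        rw [e1, e2, dist_smul]
      linarith
    have step1 : Real.exp (-(s * dist z (g • w))) ≤ E1 * Real.exp (-(s * Dg)) := by
      rw [hE1, ← Real.exp_add]
      apply Real.exp_le_exp.mpr
      have := mul_le_mul_of_nonneg_left htri hs0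
      nlinarith
    have hcoshval : Real.cosh Dg = (a^2 + b^2 + c^2 + d^2)/2 := poincare_aux_cosh g
    have hcoshpos : (0:ℝ) < Real.cosh Dg := Real.cosh_pos Dg
    have hcoshle : Real.cosh Dg ≤ Real.exp Dg := by
      rw [Real.cosh_eq]
      have hDg0 : 0 ≤ Dg := by rw [hDg]; exact dist_nonneg
      have h1 : Real.exp (-Dg) ≤ Real.exp Dg := Real.exp_le_exp.mpr (by linarith)
      linarith
    have hexpcosh : Real.exp (-Dg) ≤ (Real.cosh Dg)⁻¹ := by
      rw [Real.exp_neg]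
      exact inv_anti₀ hcoshpos hcoshle
    have step2 : Real.exp (-(s * Dg)) ≤ (Real.cosh Dg) ^ (-s) := by
      have e1 : Real.exp (-(s * Dg)) = (Real.exp (-Dg)) ^ s := by
        rw [Real.rpow_def_of_pos (Real.exp_pos _), Real.log_exp]
        ring_nf
      rw [e1, Real.rpow_neg (le_of_lt hcoshpos), ← Real.inv_rpow (le_of_lt hcoshpos)]
      exact Real.rpow_le_rpow (Real.exp_pos _).le hexpcosh hs0
    have hdet : a * d - b * c = 1 := by
      have h := hdetZ g
      rw [hadef, hbdef, hcdef, hddef]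
      exact_mod_cast congrArg (Int.cast : ℤ → ℝ) h
    have hQpos : (0:ℝ) < a^2 + c^2 := by
      rcases lt_or_eq_of_le (by positivity : (0:ℝ) ≤ a^2 + c^2) with h | h
      · exact h
      · exfalso
        apply hqne g
        have h2 : ((((g 0 0)^2 + (g 1 0)^2 : ℤ)) : ℝ) = 0 := by
          push_cast
          rw [← hadef, ← hcdef]
          linarith
        exact_mod_cast h2
    set K : ℝ := a*b + c*d with hKdef
    have hbd : b^2 + d^2 = (K^2 + 1)/(a^2+c^2) := by
      rw [eq_div_iff (ne_of_gt hQpos)]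
      linear_combination (a*d - b*c + 1) * hdet
    have hbase : (0:ℝ) < (a^2+c^2) + K^2/(a^2+c^2) := by positivity
    have step3 : (Real.cosh Dg) ^ (-s) ≤ 2^s * ((a^2+c^2) + K^2/(a^2+c^2)) ^ (-s) := by
      rw [hcoshval]
      have hle : ((a^2+c^2) + K^2/(a^2+c^2))/2 ≤ (a^2 + b^2 + c^2 + d^2)/2 := by
        have h1 : K^2/(a^2+c^2) ≤ (K^2+1)/(a^2+c^2) := by gcongr; linarith
        linarith [hbd, h1]
      calc ((a^2 + b^2 + c^2 + d^2)/2) ^ (-s)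
          ≤ (((a^2+c^2) + K^2/(a^2+c^2))/2) ^ (-s) :=
            Real.rpow_le_rpow_of_nonpos (by positivity) hle (by linarith)
        _ = 2^s * ((a^2+c^2) + K^2/(a^2+c^2)) ^ (-s) := by
            rw [Real.div_rpow (le_of_lt hbase) (by norm_num),
              Real.rpow_neg (by norm_num : (0:ℝ) ≤ 2), div_inv_eq_mul]
            ring
    have hFval : F (ι g) = ((a^2+c^2) + K^2/(a^2+c^2)) ^ (-s) := by
      have hfst : (ι g).1 = (g 0 0, g 1 0) := rfl
      have hcast : ((k₀ (ι g).1 : ℝ) + ((ι g).2 : ℝ) * (a^2 + c^2)) = K := by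
        have hint := hκ g
        rw [hKdef, hadef, hbdef, hcdef, hddef]
        rw [hfst]
        push_cast
        exact_mod_cast (congrArg (Int.cast : ℤ → ℝ) hint).symm
      rw [hF]
      simp only [hfst]
      rw [show ((((g 0 0 : ℤ)):ℝ)^2 + (((g 1 0 : ℤ)):ℝ)^2) = a^2 + c^2 from rfl]
      rw [hcast]
    rw [hFval]
    calc Real.exp (-(s * dist z (g • w))) ≤ E1 * Real.exp (-(s * Dg)) := step1
      _ ≤ E1 * ((Real.cosh Dg) ^ (-s)) := by
          apply mul_le_mul_of_nonneg_left step2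
          rw [hE1]; exact (Real.exp_pos _).le
      _ ≤ E1 * (2^s * ((a^2+c^2) + K^2/(a^2+c^2)) ^ (-s)) := by
          apply mul_le_mul_of_nonneg_left step3
          rw [hE1]; exact (Real.exp_pos _).le
      _ = (E1 * 2^s) * ((a^2+c^2) + K^2/(a^2+c^2)) ^ (-s) := by ring
  exact Summable.of_nonneg_of_le (fun g => (Real.exp_pos _).le) hbound
    ((hFsum.comp_injective hinj).mul_left (E1 * 2^s))
end

section
/- The Farey map F is conservative and ergodic with respect to the F-invariant σ-finite measure μ with density 1/x on (0,1], and μ is an infinite measure (μ((0,1]) = ∞). (This is the instance, for the modular group, of the proposition that T is conservative and ergodic with respect to μ_δ, and that μ_δ is infinite if and only if δ ≤ (r_max+1)/2; here δ = 1 = (r_max+1)/2.) -/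
open MeasureTheory

/-- The Farey map on `[0,1]`: `F(x) = x/(1-x)` for `x ≤ 1/2` and
`F(x) = (1-x)/x` for `x > 1/2`. -/
noncomputable def fareyMap (x : ℝ) : ℝ :=
  if x ≤ 1 / 2 then x / (1 - x) else (1 - x) / x

/-- The σ-finite measure on `(0,1]` with density `1/x` with respect to
Lebesgue measure. -/
noncomputable def fareyMeasure : Measure ℝ :=
  (volume.withDensity fun x => ENNReal.ofReal x⁻¹).restrict (Set.Ioc 0 1)

open Set Filter
open scoped ENNReal

lemma measurable_fareyMap : Measurable fareyMap := by
  unfold fareyMap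
  exact Measurable.ite (measurableSet_le measurable_id measurable_const)
    (measurable_id.div (measurable_const.sub measurable_id))
    ((measurable_const.sub measurable_id).div measurable_id)

lemma fareyMap_g0 (x : ℝ) (hx : 0 ≤ x) (hx1 : x ≤ 1) : fareyMap (x / (1 + x)) = x := by
  have h1 : (0:ℝ) < 1 + x := by linarith
  have h2 : x / (1 + x) ≤ 1 / 2 := by
    rw [div_le_div_iff₀ h1 two_pos]; linarith
  unfold fareyMap
  rw [if_pos h2]
  have h3 : 1 - x / (1 + x) = 1 / (1 + x) := by field_simp; ring
  rw [h3]
  field_simp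

lemma fareyMap_g1 (x : ℝ) (hx : 0 ≤ x) (hx1 : x ≤ 1) : fareyMap (1 / (1 + x)) = x := by
  have h1 : (0:ℝ) < 1 + x := by linarith
  unfold fareyMap
  rcases eq_or_lt_of_le hx1 with h | h
  · subst h; norm_num
  · have h2 : ¬ (1 / (1 + x) ≤ 1 / 2) := by
      rw [not_le, div_lt_div_iff₀ two_pos h1]; linarith
    rw [if_neg h2]
    rw [div_eq_iff (by positivity)]
    field_simp; ring

/-- The step invariant: irrational points of `(0,1)` stay irrational in `(0,1)`. -/
lemma fareyMap_step {x : ℝ} (hx : x ∈ Ioo (0:ℝ) 1) (hirr : Irrational x) :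
    fareyMap x ∈ Ioo (0:ℝ) 1 ∧ Irrational (fareyMap x) := by
  obtain ⟨h0, h1⟩ := hx
  unfold fareyMap
  by_cases h : x ≤ 1 / 2
  · have hne : x ≠ 1 / 2 := by
      intro he
      exact Rat.not_irrational (1/2) (by rw [he] at hirr; convert hirr using 2; norm_num)
    have hlt : x < 1 / 2 := lt_of_le_of_ne h hne
    rw [if_pos h]
    have hd : (0:ℝ) < 1 - x := by linarith
    refine ⟨⟨by positivity, by rw [div_lt_one hd]; linarith⟩, ?_⟩
    rintro ⟨r, hr⟩
    have hrpos : (0:ℝ) < (r:ℝ) := by rw [hr]; positivity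
    have h1r : 1 + (r:ℝ) ≠ 0 := by positivity
    apply hirr
    refine ⟨r / (1 + r), ?_⟩
    have hx' : x = (r:ℝ) / (1 + (r:ℝ)) := by
      have hrx : (r:ℝ) * (1 - x) = x := by
        rw [hr]; field_simp
      rw [eq_div_iff h1r]; linarith
    rw [hx']; push_cast; ring
  · rw [if_neg h]
    push_neg at h
    refine ⟨⟨by apply div_pos <;> linarith, by rw [div_lt_one (by linarith)]; linarith⟩, ?_⟩
    rintro ⟨r, hr⟩
    have hrpos : (0:ℝ) < (r:ℝ) := by rw [hr]; apply div_pos <;> linarith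
    have h1r : 1 + (r:ℝ) ≠ 0 := by positivity
    apply hirr
    refine ⟨1 / (1 + r), ?_⟩
    have hrx : (r:ℝ) * x = 1 - x := by rw [hr]; field_simp
    have hx' : x = 1 / (1 + (r:ℝ)) := by rw [eq_div_iff h1r]; linarith
    rw [hx']; push_cast; ring

lemma fareyMap_orbit {a : ℝ} (ha : a ∈ Ioo (0:ℝ) 1) (hirr : Irrational a) (n : ℕ) :
    fareyMap^[n] a ∈ Ioo (0:ℝ) 1 ∧ Irrational (fareyMap^[n] a) := by
  induction n with
  | zero => exact ⟨ha, hirr⟩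
  | succ n ih =>
    rw [Function.iterate_succ_apply']
    exact fareyMap_step ih.1 ih.2
/-- Coefficients of an inverse branch of an iterate of the Farey map, as a
Möbius map `x ↦ (p x + p') / (q x + q')`. -/
structure FQuad where
  p : ℝ
  p' : ℝ
  q : ℝ
  q' : ℝ

namespace FQuad

/-- The Möbius map associated with a quadruple. -/
noncomputable def mob (c : FQuad) (x : ℝ) : ℝ := (c.p * x + c.p') / (c.q * x + c.q')

/-- Append the left inverse branch `x ↦ x/(1+x)`. -/
def step0 (c : FQuad) : FQuad := ⟨c.p + c.p', c.p', c.q + c.q', c.q'⟩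

/-- Append the right inverse branch `x ↦ 1/(1+x)`. -/
def step1 (c : FQuad) : FQuad := ⟨c.p', c.p + c.p', c.q', c.q + c.q'⟩

/-- The basic positivity/determinant invariants of branch quadruples. -/
def Inv (c : FQuad) : Prop :=
  0 ≤ c.p ∧ 0 ≤ c.p' ∧ 0 ≤ c.q ∧ 1 ≤ c.q' ∧
    (c.p * c.q' - c.p' * c.q = 1 ∨ c.p * c.q' - c.p' * c.q = -1)

lemma Inv.step0 {c : FQuad} (h : c.Inv) : c.step0.Inv := by
  obtain ⟨h1, h2, h3, h4, h5⟩ := h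
  refine ⟨by simp [FQuad.step0]; linarith, by simpa [FQuad.step0] using h2,
    by simp [FQuad.step0]; linarith, by simpa [FQuad.step0] using h4, ?_⟩
  simp only [FQuad.step0]
  rcases h5 with h5 | h5
  · left; nlinarith
  · right; nlinarith

lemma Inv.step1 {c : FQuad} (h : c.Inv) : c.step1.Inv := by
  obtain ⟨h1, h2, h3, h4, h5⟩ := h
  refine ⟨by simpa [FQuad.step1] using h2, by simp [FQuad.step1]; linarith,
    by simp [FQuad.step1]; linarith, by simp [FQuad.step1]; linarith, ?_⟩
  simp only [FQuad.step1]
  rcases h5 with h5 | h5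
  · right; nlinarith
  · left; nlinarith

lemma Inv.denom_pos {c : FQuad} (h : c.Inv) {x : ℝ} (hx : 0 ≤ x) :
    0 < c.q * x + c.q' := by
  nlinarith [h.2.2.1, h.2.2.2.1]

lemma Inv.hasDerivAt {c : FQuad} (h : c.Inv) {x : ℝ} (hx : 0 ≤ x) :
    HasDerivAt c.mob ((c.p * c.q' - c.p' * c.q) / (c.q * x + c.q') ^ 2) x := by
  have hd := h.denom_pos hx
  have h1 : HasDerivAt (fun y : ℝ => c.p * y + c.p') c.p x := by
    simpa using ((hasDerivAt_id x).const_mul c.p).add_const c.p'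
  have h2 : HasDerivAt (fun y : ℝ => c.q * y + c.q') c.q x := by
    simpa using ((hasDerivAt_id x).const_mul c.q).add_const c.q'
  have := h1.div h2 (ne_of_gt hd)
  exact this.congr_deriv (by ring)

lemma Inv.injOn {c : FQuad} (h : c.Inv) : Set.InjOn c.mob (Icc 0 1) := by
  intro x hx y hy hxy
  have hdx := h.denom_pos hx.1
  have hdy := h.denom_pos hy.1
  have hdet : c.p * c.q' - c.p' * c.q ≠ 0 := by
    rcases h.2.2.2.2 with h5 | h5 <;> rw [h5] <;> norm_num
  rw [mob, mob, div_eq_div_iff (ne_of_gt hdx) (ne_of_gt hdy)] at hxy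
  have : (c.p * c.q' - c.p' * c.q) * (x - y) = 0 := by nlinarith
  rcases mul_eq_zero.1 this with h' | h'
  · exact absurd h' hdet
  · linarith

/-- For `det = ±1`-quadruples, `mob` maps `[0,1]` between its endpoint values. -/
lemma Inv.mob_mem {c : FQuad} (h : c.Inv) {x : ℝ} (hx : x ∈ Icc (0:ℝ) 1) :
    c.mob x ∈ Icc (min (c.mob 0) (c.mob 1)) (max (c.mob 0) (c.mob 1)) := by
  have hd0 := h.denom_pos (le_refl (0:ℝ))
  have hd1 := h.denom_pos (zero_le_one (α := ℝ))
  have hdx := h.denom_pos hx.1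
  obtain ⟨hx0, hx1⟩ := hx
  rcases h.2.2.2.2 with h5 | h5
  · rw [min_eq_left, max_eq_right]
    · constructor
      · rw [mob, mob, div_le_div_iff₀ hd0 hdx]; nlinarith
      · rw [mob, mob, div_le_div_iff₀ hdx hd1]; nlinarith
    · rw [mob, mob, div_le_div_iff₀ hd0 hd1]; nlinarith
    · rw [mob, mob, div_le_div_iff₀ hd0 hd1]; nlinarith
  · rw [min_eq_right, max_eq_left]
    · constructor
      · rw [mob, mob, div_le_div_iff₀ hd1 hdx]; nlinarith
      · rw [mob, mob, div_le_div_iff₀ hdx hd0]; nlinarith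
    · rw [mob, mob, div_le_div_iff₀ hd1 hd0]; nlinarith
    · rw [mob, mob, div_le_div_iff₀ hd1 hd0]; nlinarith

/-- The length of the branch interval. -/
lemma Inv.length {c : FQuad} (h : c.Inv) :
    max (c.mob 0) (c.mob 1) - min (c.mob 0) (c.mob 1) =
      1 / (c.q' * (c.q + c.q')) := by
  have hd0 := h.denom_pos (le_refl (0:ℝ))
  have hd1 := h.denom_pos (zero_le_one (α := ℝ))
  have e : c.mob 1 - c.mob 0 = (c.p * c.q' - c.p' * c.q) / (c.q' * (c.q + c.q')) := by
    rw [mob, mob]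
    rw [div_sub_div _ _ (ne_of_gt hd1) (ne_of_gt hd0)]
    have e1 : c.q * 1 + c.q' = c.q + c.q' := by ring
    have e0 : c.q * 0 + c.q' = c.q' := by ring
    rw [e1, e0]
    have hq' : (0:ℝ) < c.q' := by linarith [h.2.2.2.1]
    have hqq : (0:ℝ) < c.q + c.q' := by linarith [h.2.2.1]
    rw [div_eq_div_iff (by positivity) (by positivity)]
    ring
  have hpos : (0:ℝ) < c.q' * (c.q + c.q') := by nlinarith [h.2.2.1, h.2.2.2.1]
  rcases h.2.2.2.2 with h5 | h5
  · rw [h5] at e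
    have : c.mob 0 ≤ c.mob 1 := by nlinarith [e, hpos, one_div_pos.2 hpos]
    rw [max_eq_right this, min_eq_left this, e]
  · rw [h5] at e
    have : c.mob 1 ≤ c.mob 0 := by
      have : c.mob 1 - c.mob 0 = -(1 / (c.q' * (c.q + c.q'))) := by rw [e]; ring_nf
      nlinarith [one_div_pos.2 hpos]
    rw [max_eq_left this, min_eq_right this]
    have : c.mob 0 - c.mob 1 = -(c.mob 1 - c.mob 0) := by ring
    rw [this, e]; ring_nf

end FQuad

open ENNReal in
/-- 1-dimensional change of variables for lower Lebesgue integrals. -/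
lemma lintegral_image_1d {s : Set ℝ} {f f' : ℝ → ℝ} (hs : MeasurableSet s)
    (hf' : ∀ x ∈ s, HasDerivWithinAt f (f' x) s x) (hf : Set.InjOn f s) (g : ℝ → ℝ≥0∞) :
    ∫⁻ x in f '' s, g x = ∫⁻ x in s, ENNReal.ofReal |f' x| * g (f x) := by
  simpa only [ContinuousLinearMap.det_toSpanSingleton] using
    MeasureTheory.lintegral_image_eq_lintegral_abs_det_fderiv_mul volume hs
      (fun x hx => (hf' x hx).hasFDerivWithinAt) hf g

namespace FQuad

/-- Lower bound for the measure of images under a branch map. -/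
lemma Inv.volume_image_ge {c : FQuad} (h : c.Inv) {t : Set ℝ} (ht : MeasurableSet t)
    (hsub : t ⊆ Icc 0 1) :
    ENNReal.ofReal (((c.q + c.q') ^ 2)⁻¹) * volume t ≤ volume (c.mob '' t) := by
  have hderiv : ∀ x ∈ t, HasDerivWithinAt c.mob
      ((c.p * c.q' - c.p' * c.q) / (c.q * x + c.q') ^ 2) t x :=
    fun x hx => (h.hasDerivAt (hsub hx).1).hasDerivWithinAt
  have hinj : Set.InjOn c.mob t := h.injOn.mono hsub
  have := lintegral_image_1d ht hderiv hinj (fun _ => 1)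
  simp only [lintegral_one, Measure.restrict_apply MeasurableSet.univ, Set.univ_inter,
    mul_one] at this
  rw [this]
  have : ∫⁻ _ in t, ENNReal.ofReal (((c.q + c.q') ^ 2)⁻¹) =
      ENNReal.ofReal (((c.q + c.q') ^ 2)⁻¹) * volume t := by
    simp [Measure.restrict_apply MeasurableSet.univ]
  rw [← this]
  refine setLIntegral_mono' ht fun x hx => ?_
  apply ENNReal.ofReal_le_ofReal
  have hd := h.denom_pos (hsub hx).1
  have hqq : (0:ℝ) < c.q + c.q' := by nlinarith [h.2.2.1, h.2.2.2.1]
  have hle : c.q * x + c.q' ≤ c.q + c.q' := by nlinarith [h.2.2.1, (hsub hx).2]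
  have habs : |(c.p * c.q' - c.p' * c.q) / (c.q * x + c.q') ^ 2| =
      ((c.q * x + c.q') ^ 2)⁻¹ := by
    rcases h.2.2.2.2 with h5 | h5 <;>
      rw [h5, abs_div, abs_of_pos (show (0:ℝ) < (c.q * x + c.q') ^ 2 by positivity)] <;>
      norm_num
  rw [habs]
  apply inv_anti₀ (by positivity)
  nlinarith

end FQuad

/-- The branch quadruple following the orbit of `a` under the Farey map. -/
noncomputable def fareyQuad (a : ℝ) : ℕ → FQuad
  | 0 => ⟨1, 0, 0, 1⟩
  | n + 1 =>
    if fareyMap^[n] a ≤ 1 / 2 then (fareyQuad a n).step0 else (fareyQuad a n).step1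

lemma fareyQuad_inv (a : ℝ) (n : ℕ) : (fareyQuad a n).Inv := by
  induction n with
  | zero =>
    refine ⟨?_, ?_, ?_, ?_, ?_⟩ <;> norm_num [fareyQuad]
  | succ n ih =>
    rw [fareyQuad]
    split
    · exact ih.step0
    · exact ih.step1

lemma fareyQuad_sum (a : ℝ) (n : ℕ) :
    (n : ℝ) + 1 ≤ (fareyQuad a n).q + (fareyQuad a n).q' := by
  induction n with
  | zero => simp [fareyQuad]
  | succ n ih =>
    have h := (fareyQuad_inv a n).2.2.2.1
    rw [fareyQuad]
    split <;> simp only [FQuad.step0, FQuad.step1] <;> push_cast <;> linarith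

lemma mob_step0 {c : FQuad} (h : c.Inv) {x : ℝ} (hx : 0 ≤ x) :
    c.step0.mob x = c.mob (x / (1 + x)) := by
  have h1 : (0:ℝ) < 1 + x := by linarith
  have h2 : 0 ≤ x / (1 + x) := by positivity
  have hd1 := h.denom_pos h2
  have hd2 := h.step0.denom_pos hx
  simp only [FQuad.mob, FQuad.step0] at hd2 ⊢
  rw [div_eq_div_iff (ne_of_gt hd2) (ne_of_gt hd1)]
  field_simp
  ring

lemma mob_step1 {c : FQuad} (h : c.Inv) {x : ℝ} (hx : 0 ≤ x) :
    c.step1.mob x = c.mob (1 / (1 + x)) := by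
  have h1 : (0:ℝ) < 1 + x := by linarith
  have h2 : (0:ℝ) ≤ 1 / (1 + x) := by positivity
  have hd1 := h.denom_pos h2
  have hd2 := h.step1.denom_pos hx
  simp only [FQuad.mob, FQuad.step1] at hd2 ⊢
  rw [div_eq_div_iff (ne_of_gt hd2) (ne_of_gt hd1)]
  field_simp
  ring

lemma fareyQuad_mob_orbit {a : ℝ} (ha : a ∈ Ioo (0:ℝ) 1) (hirr : Irrational a) (n : ℕ) :
    (fareyQuad a n).mob (fareyMap^[n] a) = a := by
  induction n with
  | zero => simp [fareyQuad, FQuad.mob]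
  | succ n ih =>
    obtain ⟨hx0, hx1⟩ := (fareyMap_orbit ha hirr n).1
    set x := fareyMap^[n] a with hxdef
    rw [Function.iterate_succ_apply', ← hxdef, fareyQuad]
    by_cases hb : x ≤ 1 / 2
    · rw [if_pos hb]
      have hF : fareyMap x = x / (1 - x) := if_pos hb
      have hd : (0:ℝ) < 1 - x := by linarith
      rw [hF, mob_step0 (fareyQuad_inv a n) (by positivity)]
      have e1 : 1 + x / (1 - x) = 1 / (1 - x) := by field_simp; ring
      have : x / (1 - x) / (1 + x / (1 - x)) = x := by
        rw [e1, div_div_div_cancel_right₀, div_one]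
        exact ne_of_gt hd
      rw [this, ih]
    · rw [if_neg hb]
      push_neg at hb
      have hF : fareyMap x = (1 - x) / x := if_neg (not_le.2 hb)
      rw [hF, mob_step1 (fareyQuad_inv a n) (div_nonneg (by linarith) (by linarith))]
      have e1 : 1 + (1 - x) / x = 1 / x := by field_simp; ring
      have : 1 / (1 + (1 - x) / x) = x := by rw [e1, one_div_one_div]
      rw [this, ih]

lemma fareyQuad_iterate (a : ℝ) (n : ℕ) :
    ∀ x ∈ Icc (0:ℝ) 1, fareyMap^[n] ((fareyQuad a n).mob x) = x := by
  induction n with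
  | zero => intro x _; simp [fareyQuad, FQuad.mob]
  | succ n ih =>
    intro x hx
    obtain ⟨hx0, hx1⟩ := hx
    rw [Function.iterate_succ_apply', fareyQuad]
    by_cases hb : fareyMap^[n] a ≤ 1 / 2
    · rw [if_pos hb, mob_step0 (fareyQuad_inv a n) hx0]
      have hmem : x / (1 + x) ∈ Icc (0:ℝ) 1 := by
        constructor
        · positivity
        · rw [div_le_one (by linarith)]; linarith
      rw [ih _ hmem, fareyMap_g0 x hx0 hx1]
    · rw [if_neg hb, mob_step1 (fareyQuad_inv a n) hx0]
      have hmem : 1 / (1 + x) ∈ Icc (0:ℝ) 1 := by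
        constructor
        · positivity
        · rw [div_le_one (by linarith)]; linarith
      rw [ih _ hmem, fareyMap_g1 x hx0 hx1]

/-- Infinitely many times the orbit is in the right half. -/
lemma fareyMap_orbit_right {a : ℝ} (ha : a ∈ Ioo (0:ℝ) 1) (hirr : Irrational a) (N : ℕ) :
    ∃ m, N ≤ m ∧ ¬ (fareyMap^[m] a ≤ 1 / 2) := by
  by_contra hcon
  push_neg at hcon
  have key : ∀ k : ℕ, (fareyMap^[N + k] a)⁻¹ = (fareyMap^[N] a)⁻¹ - k := by
    intro k
    induction k with
    | zero => simp
    | succ k ihk =>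
      have hb := hcon (N + k) (by omega)
      obtain ⟨h0, h1⟩ := (fareyMap_orbit ha hirr (N + k)).1
      have : N + (k + 1) = (N + k) + 1 := by omega
      rw [this, Function.iterate_succ_apply']
      set y := fareyMap^[N + k] a
      have hF : fareyMap y = y / (1 - y) := if_pos hb
      rw [hF]
      have hd : (0:ℝ) < 1 - y := by linarith
      have : (y / (1 - y))⁻¹ = y⁻¹ - 1 := by
        rw [inv_div]
        field_simp
      rw [this, ihk]
      push_cast
      ring
  set k := ⌈(fareyMap^[N] a)⁻¹⌉₊
  have h1 := key k
  have h2 : (0:ℝ) < fareyMap^[N + k] a := (fareyMap_orbit ha hirr (N + k)).1.1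
  have h3 : (fareyMap^[N] a)⁻¹ ≤ (k : ℝ) := Nat.le_ceil _
  have h4 : (0:ℝ) < (fareyMap^[N + k] a)⁻¹ := by positivity
  rw [h1] at h4
  linarith

/-- There are arbitrarily large "good" times, where the branch quadruple
satisfies `q ≤ q'`. -/
lemma fareyQuad_good {a : ℝ} (ha : a ∈ Ioo (0:ℝ) 1) (hirr : Irrational a) (N : ℕ) :
    ∃ n, N ≤ n ∧ n ≠ 0 ∧ (fareyQuad a n).q ≤ (fareyQuad a n).q' := by
  obtain ⟨m, hm, hb⟩ := fareyMap_orbit_right ha hirr N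
  refine ⟨m + 1, by omega, by omega, ?_⟩
  have h := (fareyQuad_inv a m).2.2.1
  have h' := (fareyQuad_inv a m).2.2.2.1
  rw [fareyQuad, if_neg hb]
  simp only [FQuad.step1]
  linarith

/-- Core lemma: from any positive-measure subset of `(0,1)` some point is moved
into any other positive-measure subset by some iterate of the Farey map. -/
lemma farey_core {s t : Set ℝ} (hs : MeasurableSet s) (ht : MeasurableSet t)
    (hssub : s ⊆ Ioo 0 1) (htsub : t ⊆ Ioo 0 1)
    (hs0 : volume s ≠ 0) (ht0 : volume t ≠ 0) :
    ∃ x ∈ s, ∃ n : ℕ, n ≠ 0 ∧ fareyMap^[n] x ∈ t := by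
  by_contra hcon
  push_neg at hcon
  -- the size of `t`
  have httop : volume t ≠ ⊤ := by
    refine ne_of_lt (lt_of_le_of_lt (measure_mono htsub) ?_)
    rw [Real.volume_Ioo]
    exact ENNReal.ofReal_lt_top
  set γ : ℝ := (volume t).toReal with hγdef
  have hγ0 : 0 < γ := ENNReal.toReal_pos ht0 httop
  have hγ1 : γ ≤ 1 := by
    rw [hγdef]
    have : volume t ≤ 1 := by
      have : volume t ≤ volume (Ioo (0:ℝ) 1) := measure_mono htsub
      rwa [Real.volume_Ioo, show (1:ℝ) - 0 = 1 by ring, ENNReal.ofReal_one] at this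
    calc (volume t).toReal ≤ (1 : ℝ≥0∞).toReal := ENNReal.toReal_mono ENNReal.one_ne_top this
      _ = 1 := by simp
  have hvt : volume t = ENNReal.ofReal γ := (ENNReal.ofReal_toReal httop).symm
  -- pick an irrational density point of `s`
  have hae1 : ∀ᵐ x ∂(volume.restrict s),
      Filter.Tendsto (fun r => volume (s ∩ Metric.closedBall x r) /
        volume (Metric.closedBall x r)) (nhdsWithin 0 (Ioi 0)) (nhds 1) :=
    Besicovitch.ae_tendsto_measure_inter_div volume s
  have hae2 : ∀ᵐ x ∂(volume.restrict s), Irrational x := by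
    refine ae_restrict_of_ae ?_
    rw [ae_iff]
    have he : {x : ℝ | ¬ Irrational x} = Set.range ((↑) : ℚ → ℝ) := by
      ext x; simp [Irrational]
    rw [he]
    exact (Set.countable_range _).measure_zero _
  have hae3 : ∀ᵐ x ∂(volume.restrict s), x ∈ s := ae_restrict_mem hs
  have hne : (ae (volume.restrict s)).NeBot := by
    rw [ae_neBot, Ne, Measure.restrict_eq_zero]
    exact hs0
  obtain ⟨a, ⟨hdens, hairr⟩, has⟩ := ((hae1.and hae2).and hae3).exists
  have haIoo : a ∈ Ioo (0:ℝ) 1 := hssub has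
  -- quantitative density
  have hsmall : (1 : ℝ≥0∞) - ENNReal.ofReal (γ/8) < 1 := by
    apply ENNReal.sub_lt_self ENNReal.one_ne_top one_ne_zero
    simp [ENNReal.ofReal_eq_zero]
    linarith
  have hev : ∀ᶠ r in nhdsWithin 0 (Ioi 0),
      volume (s ∩ Metric.closedBall a r) / volume (Metric.closedBall a r) ∈
        Ioi ((1 : ℝ≥0∞) - ENNReal.ofReal (γ/8)) :=
    hdens (Ioi_mem_nhds hsmall)
  obtain ⟨δ, hδ0, hδ⟩ := (nhdsGT_basis (0:ℝ)).eventually_iff.mp hev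
  -- choose a good time
  obtain ⟨N, hN⟩ := exists_nat_gt (1/δ)
  obtain ⟨n, hnN, hn0, hgood⟩ := fareyQuad_good haIoo hairr N
  set c := fareyQuad a n with hcdef
  have hinv : c.Inv := fareyQuad_inv a n
  have hq' : (1:ℝ) ≤ c.q' := hinv.2.2.2.1
  have hq : (0:ℝ) ≤ c.q := hinv.2.2.1
  set L : ℝ := 1 / (c.q' * (c.q + c.q')) with hLdef
  have hqq : (0:ℝ) < c.q + c.q' := by linarith
  have hL0 : 0 < L := by positivity
  have hsum : (n : ℝ) + 1 ≤ c.q + c.q' := fareyQuad_sum a n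
  have hLδ : L < δ := by
    have h1 : L ≤ 1 / (c.q + c.q') := by
      rw [hLdef, div_le_div_iff₀ (by positivity) hqq]
      nlinarith
    have h2 : (1:ℝ) / (c.q + c.q') ≤ 1 / ((N:ℝ) + 1) := by
      apply div_le_div_of_nonneg_left (by norm_num) (by positivity)
      have : (N:ℝ) ≤ (n:ℝ) := by exact_mod_cast hnN
      linarith
    have h3 : (1:ℝ) / ((N:ℝ) + 1) < δ := by
      rw [div_lt_iff₀ (by positivity)]
      have : 1 / δ < (N:ℝ) := hN
      rw [div_lt_iff₀ hδ0] at this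
      nlinarith
    linarith
  -- the branch interval
  set J : Set ℝ := Icc (min (c.mob 0) (c.mob 1)) (max (c.mob 0) (c.mob 1)) with hJdef
  have hlen : max (c.mob 0) (c.mob 1) - min (c.mob 0) (c.mob 1) = L := hinv.length
  have haJ : a ∈ J := by
    have h1 : fareyMap^[n] a ∈ Icc (0:ℝ) 1 :=
      Ioo_subset_Icc_self (fareyMap_orbit haIoo hairr n).1
    have := hinv.mob_mem h1
    rwa [fareyQuad_mob_orbit haIoo hairr n] at this
  have hJcb : J ⊆ Metric.closedBall a L := by
    intro x hx
    rw [Metric.mem_closedBall, Real.dist_eq, abs_le]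
    obtain ⟨hx1, hx2⟩ := hx
    obtain ⟨ha1, ha2⟩ := haJ
    constructor <;> linarith
  -- the image of `t`
  set K : Set ℝ := c.mob '' t with hKdef
  have hKJ : K ⊆ J := by
    rintro _ ⟨y, hy, rfl⟩
    exact hinv.mob_mem (Ioo_subset_Icc_self (htsub hy))
  have hKt : ∀ x ∈ K, fareyMap^[n] x ∈ t := by
    rintro _ ⟨y, hy, rfl⟩
    rw [fareyQuad_iterate a n y (Ioo_subset_Icc_self (htsub hy))]
    exact hy
  have hKs : K ⊆ J \ s := by
    intro x hxK
    refine ⟨hKJ hxK, fun hxs => ?_⟩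
    exact hcon x hxs n hn0 (hKt x hxK)
  -- lower bound for the measure of `K`
  have hK1 : ENNReal.ofReal (L * γ / 2) ≤ volume K := by
    have h1 := hinv.volume_image_ge ht (htsub.trans Ioo_subset_Icc_self)
    refine le_trans ?_ h1
    rw [hvt, ← ENNReal.ofReal_mul (by positivity)]
    apply ENNReal.ofReal_le_ofReal
    have h2 : L * (c.q + c.q') ^ 2 ≤ 2 := by
      rw [hLdef]
      have : 1 / (c.q' * (c.q + c.q')) * (c.q + c.q') ^ 2 = (c.q + c.q') / c.q' := by
        field_simp
      rw [this, div_le_iff₀ (by linarith)]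
      linarith [hgood]
    have h3 : L / 2 ≤ ((c.q + c.q') ^ 2)⁻¹ := by
      rw [inv_eq_one_div, div_le_div_iff₀ two_pos (by positivity)]
      nlinarith
    nlinarith
  -- upper bound via density
  have hcb := hδ ⟨hL0, hLδ⟩
  have hvcb : volume (Metric.closedBall a L) = ENNReal.ofReal (2 * L) := by
    rw [Real.volume_closedBall]
  have hlow : ENNReal.ofReal ((1 - γ/8) * (2*L)) < volume (s ∩ Metric.closedBall a L) := by
    rw [mem_Ioi] at hcb
    have hb0 : volume (Metric.closedBall a L) ≠ 0 := by
      rw [hvcb]; simp [ENNReal.ofReal_eq_zero]; linarith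
    have hbt : volume (Metric.closedBall a L) ≠ ⊤ := by
      rw [hvcb]; exact ENNReal.ofReal_ne_top
    have := (ENNReal.lt_div_iff_mul_lt (Or.inl hb0) (Or.inl hbt)).mp hcb
    calc ENNReal.ofReal ((1 - γ/8) * (2*L))
        = ENNReal.ofReal (1 - γ/8) * ENNReal.ofReal (2*L) := by
          rw [ENNReal.ofReal_mul (by linarith)]
      _ = ((1:ℝ≥0∞) - ENNReal.ofReal (γ/8)) * volume (Metric.closedBall a L) := by
          rw [hvcb, ENNReal.ofReal_sub _ (by positivity), ENNReal.ofReal_one]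
      _ < volume (s ∩ Metric.closedBall a L) := this
  have hup : volume (J \ s) ≤ ENNReal.ofReal (L * γ / 4) := by
    have h1 : J \ s ⊆ Metric.closedBall a L \ s := fun x hx => ⟨hJcb hx.1, hx.2⟩
    have h2 := measure_inter_add_diff (μ := volume) (Metric.closedBall a L) hs
    have h3 : volume (Metric.closedBall a L \ s) =
        volume (Metric.closedBall a L) - volume (Metric.closedBall a L ∩ s) := by
      rw [← h2]
      rw [ENNReal.add_sub_cancel_left]
      rw [Set.inter_comm]
      exact ne_top_of_le_ne_top (by rw [hvcb]; exact ENNReal.ofReal_ne_top)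
        (measure_mono Set.inter_subset_right)
    calc volume (J \ s) ≤ volume (Metric.closedBall a L \ s) := measure_mono h1
      _ = volume (Metric.closedBall a L) - volume (Metric.closedBall a L ∩ s) := h3
      _ ≤ ENNReal.ofReal (2*L) - ENNReal.ofReal ((1 - γ/8) * (2*L)) := by
          rw [hvcb, Set.inter_comm]
          exact tsub_le_tsub_left hlow.le _
      _ = ENNReal.ofReal (2*L - (1 - γ/8) * (2*L)) := by
          rw [ENNReal.ofReal_sub _ (by nlinarith)]
      _ = ENNReal.ofReal (L * γ / 4) := by ring_nf
  have : ENNReal.ofReal (L * γ / 2) ≤ ENNReal.ofReal (L * γ / 4) :=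
    le_trans hK1 (le_trans (measure_mono hKs) hup)
  rw [ENNReal.ofReal_le_ofReal_iff (by positivity)] at this
  nlinarith

lemma fareyMeasure_apply {E : Set ℝ} (hE : MeasurableSet E) :
    fareyMeasure E = ∫⁻ x in E ∩ Ioc 0 1, ENNReal.ofReal x⁻¹ := by
  rw [fareyMeasure, Measure.restrict_apply hE,
    withDensity_apply _ (hE.inter measurableSet_Ioc)]

lemma fareyMeasure_zero {E : Set ℝ} (hE : MeasurableSet E)
    (h : volume (E ∩ Ioo 0 1) = 0) : fareyMeasure E = 0 := by
  rw [fareyMeasure_apply hE]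
  have hsub : E ∩ Ioc 0 1 ⊆ (E ∩ Ioo 0 1) ∪ {1} := by
    rintro x ⟨hxE, hx0, hx1⟩
    rcases eq_or_lt_of_le hx1 with h1 | h1
    · exact Or.inr (by simp [h1])
    · exact Or.inl ⟨hxE, hx0, h1⟩
  have hnull : volume (E ∩ Ioc 0 1) = 0 :=
    measure_mono_null hsub (by
      refine measure_union_null h ?_
      exact measure_singleton 1)
  exact setLIntegral_measure_zero _ _ hnull

lemma hasDerivAt_g0 (y : ℝ) (hy : (0:ℝ) < 1 + y) :
    HasDerivAt (fun z : ℝ => z / (1 + z)) (((1 + y) ^ 2)⁻¹) y := by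
  have h1 : HasDerivAt (fun z : ℝ => z) 1 y := hasDerivAt_id y
  have h2 : HasDerivAt (fun z : ℝ => 1 + z) 1 y := by
    simpa using (hasDerivAt_id y).const_add 1
  have := h1.div h2 (ne_of_gt hy)
  exact this.congr_deriv (by ring)

lemma hasDerivAt_g1 (y : ℝ) (hy : (0:ℝ) < 1 + y) :
    HasDerivAt (fun z : ℝ => 1 / (1 + z)) (-(((1 + y) ^ 2)⁻¹)) y := by
  have h1 : HasDerivAt (fun _ : ℝ => (1:ℝ)) 0 y := hasDerivAt_const y 1
  have h2 : HasDerivAt (fun z : ℝ => 1 + z) 1 y := by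
    simpa using (hasDerivAt_id y).const_add 1
  have := h1.div h2 (ne_of_gt hy)
  exact this.congr_deriv (by ring)

lemma fareyMeasure_preserving :
    MeasurePreserving fareyMap fareyMeasure fareyMeasure := by
  refine ⟨measurable_fareyMap, ?_⟩
  refine Measure.ext fun S hS => ?_
  rw [Measure.map_apply measurable_fareyMap hS,
    fareyMeasure_apply (measurable_fareyMap hS), fareyMeasure_apply hS]
  set S₀ : Set ℝ := S ∩ Ioo 0 1 with hS₀def
  have hS₀ : MeasurableSet S₀ := hS.inter measurableSet_Ioo
  have hS₀sub : S₀ ⊆ Ioo 0 1 := inter_subset_right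
  set g0 : ℝ → ℝ := fun y => y / (1 + y) with hg0def
  set g1 : ℝ → ℝ := fun y => 1 / (1 + y) with hg1def
  -- identification of the two inverse-branch images
  have hA : g0 '' S₀ = Ioo (0:ℝ) (1/2) ∩ fareyMap ⁻¹' S₀ := by
    ext x
    constructor
    · rintro ⟨y, hy, rfl⟩
      obtain ⟨hyS, hy0, hy1⟩ := hy
      have h1 : (0:ℝ) < 1 + y := by linarith
      refine ⟨⟨by positivity, ?_⟩, ?_⟩
      · rw [hg0def]; simp only
        rw [div_lt_div_iff₀ h1 two_pos]; linarith
      · simp only [Set.mem_preimage, hg0def]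
        rw [fareyMap_g0 y (le_of_lt hy0) (le_of_lt hy1)]
        exact ⟨hyS, hy0, hy1⟩
    · rintro ⟨⟨hx0, hx2⟩, hxF⟩
      have hle : x ≤ 1/2 := le_of_lt hx2
      have hF : fareyMap x = x / (1 - x) := if_pos hle
      refine ⟨fareyMap x, hxF, ?_⟩
      rw [hF, hg0def]
      simp only
      have hd : (0:ℝ) < 1 - x := by linarith
      have e1 : 1 + x / (1 - x) = 1 / (1 - x) := by field_simp; ring
      rw [e1, div_div_div_cancel_right₀, div_one]
      exact ne_of_gt hd
  have hB : g1 '' S₀ = Ioo (1/2:ℝ) 1 ∩ fareyMap ⁻¹' S₀ := by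
    ext x
    constructor
    · rintro ⟨y, hy, rfl⟩
      obtain ⟨hyS, hy0, hy1⟩ := hy
      have h1 : (0:ℝ) < 1 + y := by linarith
      refine ⟨⟨?_, ?_⟩, ?_⟩
      · rw [hg1def]; simp only
        rw [div_lt_div_iff₀ two_pos h1]; linarith
      · rw [hg1def]; simp only
        rw [div_lt_one h1]; linarith
      · simp only [Set.mem_preimage, hg1def]
        rw [fareyMap_g1 y (le_of_lt hy0) (le_of_lt hy1)]
        exact ⟨hyS, hy0, hy1⟩
    · rintro ⟨⟨hx0, hx2⟩, hxF⟩
      have hlt : ¬ (x ≤ 1/2) := by linarith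
      have hF : fareyMap x = (1 - x) / x := if_neg hlt
      refine ⟨fareyMap x, hxF, ?_⟩
      rw [hF, hg1def]
      simp only
      have hd : (0:ℝ) < x := by linarith
      have e1 : 1 + (1 - x) / x = 1 / x := by field_simp; ring
      rw [e1, one_div_one_div]
  -- the preimage agrees a.e. with the union of branch images
  have haeeq : ((fareyMap ⁻¹' S ∩ Ioc 0 1 : Set ℝ) : Set ℝ) =ᵐ[volume]
      ((g0 '' S₀ ∪ g1 '' S₀ : Set ℝ) : Set ℝ) := by
    rw [hA, hB]
    refine (MeasureTheory.ae_eq_set).2 ⟨?_, ?_⟩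
    · refine measure_mono_null (fun x hx => ?_)
        (show volume ({1/2, 1} : Set ℝ) = 0 by
          refine measure_union_null (measure_singleton _) (measure_singleton _))
      obtain ⟨⟨hxS, hx0, hx1⟩, hxn⟩ := hx
      by_contra hne
      simp only [Set.mem_insert_iff, Set.mem_singleton_iff, not_or] at hne
      obtain ⟨hne2, hne1⟩ := hne
      have hx1' : x < 1 := lt_of_le_of_ne hx1 hne1
      rcases lt_or_gt_of_ne hne2 with hlt | hgt
      · have hF : fareyMap x = x / (1 - x) := if_pos (le_of_lt hlt)
        have hFS : fareyMap x ∈ S₀ := by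
          refine ⟨hxS, ?_, ?_⟩
          · rw [hF]; apply div_pos hx0; linarith
          · rw [hF, div_lt_one (by linarith)]; linarith
        exact hxn (Or.inl ⟨⟨hx0, hlt⟩, hFS⟩)
      · have hF : fareyMap x = (1 - x) / x := if_neg (by linarith)
        have hFS : fareyMap x ∈ S₀ := by
          refine ⟨hxS, ?_, ?_⟩
          · rw [hF]; apply div_pos; linarith; linarith
          · rw [hF, div_lt_one (by linarith)]; linarith
        exact hxn (Or.inr ⟨⟨hgt, hx1'⟩, hFS⟩)
    · refine measure_mono_null (fun x hx => ?_) (measure_empty)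
      exfalso
      obtain ⟨hx1, hx2⟩ := hx
      rcases hx1 with ⟨⟨hxa, hxb⟩, hxF⟩ | ⟨⟨hxa, hxb⟩, hxF⟩
      · have hFS : fareyMap x ∈ S := (Set.mem_preimage.mp hxF).1
        exact hx2 ⟨hFS, hxa, by linarith⟩
      · have hFS : fareyMap x ∈ S := (Set.mem_preimage.mp hxF).1
        exact hx2 ⟨hFS, by linarith, le_of_lt hxb⟩
  rw [setLIntegral_congr haeeq]
  have hAm : MeasurableSet (g0 '' S₀) := by
    rw [hA]; exact measurableSet_Ioo.inter (measurable_fareyMap hS₀)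
  have hBm : MeasurableSet (g1 '' S₀) := by
    rw [hB]; exact measurableSet_Ioo.inter (measurable_fareyMap hS₀)
  have hdisj : Disjoint (g0 '' S₀) (g1 '' S₀) := by
    rw [hA, hB]
    refine Set.disjoint_of_subset inter_subset_left inter_subset_left ?_
    rw [Set.disjoint_left]
    rintro x ⟨_, h2⟩ ⟨h3, _⟩
    linarith
  rw [lintegral_union hBm hdisj]
  have hg0d : ∀ y ∈ S₀, HasDerivWithinAt g0 (((1+y)^2)⁻¹) S₀ y := fun y hy =>
    (hasDerivAt_g0 y (by linarith [(hS₀sub hy).1])).hasDerivWithinAt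
  have hg1d : ∀ y ∈ S₀, HasDerivWithinAt g1 (-(((1+y)^2)⁻¹)) S₀ y := fun y hy =>
    (hasDerivAt_g1 y (by linarith [(hS₀sub hy).1])).hasDerivWithinAt
  have hg0inj : Set.InjOn g0 S₀ := by
    intro x hx y hy hxy
    have hx1 : (0:ℝ) < 1 + x := by linarith [(hS₀sub hx).1]
    have hy1 : (0:ℝ) < 1 + y := by linarith [(hS₀sub hy).1]
    rw [hg0def] at hxy
    simp only at hxy
    rw [div_eq_div_iff (ne_of_gt hx1) (ne_of_gt hy1)] at hxy
    nlinarith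
  have hg1inj : Set.InjOn g1 S₀ := by
    intro x hx y hy hxy
    have hx1 : (0:ℝ) < 1 + x := by linarith [(hS₀sub hx).1]
    have hy1 : (0:ℝ) < 1 + y := by linarith [(hS₀sub hy).1]
    rw [hg1def] at hxy
    simp only at hxy
    rw [div_eq_div_iff (ne_of_gt hx1) (ne_of_gt hy1)] at hxy
    nlinarith
  rw [lintegral_image_1d hS₀ hg0d hg0inj, lintegral_image_1d hS₀ hg1d hg1inj]
  have hmeas : Measurable fun y : ℝ =>
      ENNReal.ofReal |((1+y)^2)⁻¹| * ENNReal.ofReal (g0 y)⁻¹ := by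
    apply Measurable.fun_mul
    · exact (((measurable_const.add measurable_id).pow_const 2).inv.abs).ennreal_ofReal
    · exact ((measurable_id.div (measurable_const.add measurable_id)).inv).ennreal_ofReal
  rw [← lintegral_add_left hmeas]
  have hpt : ∀ y ∈ S₀,
      ENNReal.ofReal |((1+y)^2)⁻¹| * ENNReal.ofReal (g0 y)⁻¹ +
        ENNReal.ofReal |(-(((1+y)^2)⁻¹))| * ENNReal.ofReal (g1 y)⁻¹ =
      ENNReal.ofReal y⁻¹ := by
    intro y hy
    obtain ⟨hy0, hy1⟩ := hS₀sub hy
    have h1 : (0:ℝ) < 1 + y := by linarith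
    have habs : |((1+y)^2)⁻¹| = ((1+y)^2)⁻¹ := abs_of_pos (by positivity)
    rw [abs_neg, habs, hg0def, hg1def]
    simp only
    rw [← ENNReal.ofReal_mul (by positivity), ← ENNReal.ofReal_mul (by positivity),
      ← ENNReal.ofReal_add (by positivity) (by positivity)]
    congr 1
    field_simp
  rw [setLIntegral_congr_fun hS₀ hpt]
  refine setLIntegral_congr ?_
  refine (MeasureTheory.ae_eq_set).2 ⟨?_, ?_⟩
  · refine measure_mono_null (fun x hx => ?_) measure_empty
    exact (hx.2 ⟨hx.1.1, hx.1.2.1, le_of_lt hx.1.2.2⟩).elim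
  · refine measure_mono_null (fun x hx => ?_) (measure_singleton (1:ℝ))
    obtain ⟨⟨hxS, hx0, hx1⟩, hxn⟩ := hx
    have : ¬ (x < 1) := fun h => hxn ⟨hxS, hx0, h⟩
    simpa using le_antisymm hx1 (not_lt.mp this)

lemma fareyMeasure_univ_eq_top : fareyMeasure univ = ⊤ := by
  rw [fareyMeasure_apply MeasurableSet.univ, Set.univ_inter]
  refine ENNReal.eq_top_of_forall_nnreal_le fun r => ?_
  set ε : ℝ := Real.exp (-(r:ℝ)) with hεdef
  have hε0 : 0 < ε := Real.exp_pos _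
  have hε1 : ε ≤ 1 := by
    rw [hεdef, ← Real.exp_zero]
    exact Real.exp_le_exp.mpr (neg_nonpos.mpr r.coe_nonneg)
  have hsub : Ioc ε 1 ⊆ Ioc 0 1 := Ioc_subset_Ioc_left (le_of_lt hε0)
  have hint : IntegrableOn (fun x : ℝ => x⁻¹) (Ioc ε 1) := by
    apply (ContinuousOn.integrableOn_Icc ?_).mono_set Ioc_subset_Icc_self
    exact continuousOn_id.inv₀ fun x hx => ne_of_gt (lt_of_lt_of_le hε0 hx.1)
  have h1 : ∫⁻ x in Ioc ε 1, ENNReal.ofReal x⁻¹ =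
      ENNReal.ofReal (∫ x in Ioc ε 1, x⁻¹) := by
    rw [← ofReal_integral_eq_lintegral_ofReal hint]
    exact ae_restrict_of_forall_mem measurableSet_Ioc fun x hx => by
      have : (0:ℝ) < x := lt_trans hε0 hx.1
      positivity
  have h2 : ∫ x in Ioc ε 1, x⁻¹ = (r : ℝ) := by
    rw [← intervalIntegral.integral_of_le hε1]
    rw [integral_inv (by
      intro hmem
      rw [Set.uIcc_of_le hε1] at hmem
      exact absurd hmem.1 (not_le.mpr hε0))]
    rw [hεdef, one_div, ← Real.exp_neg, neg_neg, Real.log_exp]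
  calc (r : ℝ≥0∞) = ENNReal.ofReal (r : ℝ) := ENNReal.ofReal_coe_nnreal.symm
    _ = ∫⁻ x in Ioc ε 1, ENNReal.ofReal x⁻¹ := by rw [h1, h2]
    _ ≤ ∫⁻ x in Ioc 0 1, ENNReal.ofReal x⁻¹ := lintegral_mono_set hsub

/-- The Farey map is conservative and ergodic with respect to its invariant
σ-finite measure with density `1/x` on `(0,1]`, and this measure is infinite. -/
theorem fareyMap_conservative_ergodic_infinite :
    MeasureTheory.Conservative fareyMap fareyMeasure ∧
    Ergodic fareyMap fareyMeasure ∧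
    fareyMeasure Set.univ = ⊤ := by
  have hmp := fareyMeasure_preserving
  have hiter : ∀ (S : Set ℝ), fareyMap ⁻¹' S = S → ∀ m : ℕ, fareyMap^[m] ⁻¹' S = S := by
    intro S hS m
    induction m with
    | zero => simp
    | succ m ih => rw [Function.iterate_succ, Set.preimage_comp, ih, hS]
  refine ⟨?_, ?_, fareyMeasure_univ_eq_top⟩
  · refine ⟨hmp.quasiMeasurePreserving, ?_⟩
    intro W hW h0
    have h0' : volume (W ∩ Ioo 0 1) ≠ 0 := fun h => h0 (fareyMeasure_zero hW h)
    obtain ⟨x, hx, n, hn, hxn⟩ :=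
      farey_core (hW.inter measurableSet_Ioo) (hW.inter measurableSet_Ioo)
        inter_subset_right inter_subset_right h0' h0'
    exact ⟨x, hx.1, n, hn, hxn.1⟩
  · refine ⟨hmp, ⟨fun S hS hSinv => ?_⟩⟩
    rw [Filter.eventuallyConst_set]
    by_cases hset : volume (Sᶜ ∩ Ioo 0 1) = 0
    · left
      have hz := fareyMeasure_zero hS.compl hset
      rw [measure_eq_zero_iff_ae_notMem] at hz
      filter_upwards [hz] with x hx
      simpa using hx
    · right
      have hz : volume (S ∩ Ioo 0 1) = 0 := by
        by_contra hs0
        obtain ⟨x, hx, n, hn, hxn⟩ :=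
          farey_core (hS.inter measurableSet_Ioo) (hS.compl.inter measurableSet_Ioo)
            inter_subset_right inter_subset_right hs0 hset
        have hxS : x ∈ S := hx.1
        have hmem : fareyMap^[n] x ∈ S := by
          rw [← hiter S hSinv n] at hxS
          exact hxS
        exact hxn.1 hmem
      have hz2 := fareyMeasure_zero hS hz
      rwa [measure_eq_zero_iff_ae_notMem] at hz2
end

section
/- For the Farey map F with invariant measure μ of density 1/x on (0,1], and the set D = [1/2, 1], the wandering rate satisfies w_n := μ(⋃_{k=1}^{n} F^{−(k−1)}(D)) ≍ log n; that is, there exist 0 < c ≤ C with c·log n ≤ μ(⋃_{k=0}^{n−1} F^{−k}([1/2,1])) ≤ C·log n for all n ≥ 2. (This is the case δ = (r_max+1)/2 of the wandering rate asymptotics w_n ≍ log n used in the paper, realized for the modular group.) -/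
open MeasureTheory Real

/-- On `(0, 1/(k+1)]`, the `k`-th iterate of the Farey map is `x/(1-kx)`. -/
lemma farey_iter (k : ℕ) : ∀ x : ℝ, 0 < x → x ≤ 1/(k+1) →
    fareyMap^[k] x = x / (1 - k * x) := by
  induction k with
  | zero => intro x hx _; simp
  | succ k ih =>
    intro x hx hle
    push_cast at hle
    have hk1 : x ≤ 1/(k+1) := by
      apply hle.trans
      apply one_div_le_one_div_of_le (by positivity)
      linarith
    have h1 : (0:ℝ) < 1 - k * x := by
      have : (k:ℝ) * x ≤ k * (1/(k+1)) := by gcongr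
      have hlt : (k:ℝ) * (1/(k+1)) < 1 := by
        rw [mul_one_div, div_lt_one (by positivity)]; linarith
      linarith
    have hxk2 : ((k:ℝ)+2) * x ≤ 1 := by
      calc ((k:ℝ)+2) * x ≤ (k+2) * (1/(k+1+1)) := by gcongr
      _ = 1 := by field_simp; ring
    rw [Function.iterate_succ_apply', ih x hx hk1, fareyMap]
    rw [if_pos (by rw [div_le_div_iff₀ h1 (by norm_num)]; linarith)]
    have h2 : (0:ℝ) < 1 - (k+1) * x := by nlinarith
    have h3 : 1 - x / (1 - k*x) = (1 - (k+1)*x)/(1 - k*x) := by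
      rw [eq_div_iff h1.ne', sub_mul, div_mul_cancel₀ _ h1.ne']; ring
    rw [h3]
    push_cast
    rw [div_div_div_eq]
    rw [div_eq_div_iff (by positivity) (by positivity)]
    ring

/-- If `1/(m+2) ≤ x ≤ 1/(m+1)` then the `m`-th iterate lands in `[1/2,1]`. -/
lemma farey_hit (m : ℕ) (x : ℝ) (h1 : 1/((m:ℝ)+2) ≤ x) (h2 : x ≤ 1/(m+1)) :
    fareyMap^[m] x ∈ Set.Icc (1/2 : ℝ) 1 := by
  have hx : 0 < x := lt_of_lt_of_le (by positivity) h1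
  rw [farey_iter m x hx h2]
  have hm1 : ((m:ℝ)+1) * x ≤ 1 := by
    calc ((m:ℝ)+1) * x ≤ (m+1) * (1/(m+1)) := by gcongr
    _ = 1 := by field_simp
  have hm2 : 1 ≤ ((m:ℝ)+2) * x := by
    calc (1:ℝ) = (m+2) * (1/(m+2)) := by field_simp
    _ ≤ (m+2) * x := by gcongr
  have hpos : (0:ℝ) < 1 - m * x := by nlinarith
  constructor
  · rw [le_div_iff₀ hpos]; nlinarith
  · rw [div_le_one hpos]; nlinarith

/-- The union of preimages, intersected with `(0,1]`, is `[1/(n+1), 1]`. -/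
lemma farey_union (n : ℕ) (hn : 1 ≤ n) :
    (⋃ k ∈ Finset.range n, (fareyMap^[k]) ⁻¹' Set.Icc (1/2 : ℝ) 1) ∩ Set.Ioc 0 1
      = Set.Icc (1/((n:ℝ)+1)) 1 := by
  ext x
  simp only [Set.mem_inter_iff, Set.mem_iUnion, Finset.mem_range, Set.mem_preimage,
    Set.mem_Icc, Set.mem_Ioc]
  constructor
  · rintro ⟨⟨k, hk, hmem⟩, hx0, hx1⟩
    refine ⟨?_, hx1⟩
    by_contra hlt
    push_neg at hlt
    have hk1 : x ≤ 1/((k:ℝ)+1) := by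
      apply hlt.le.trans
      apply one_div_le_one_div_of_le (by positivity)
      have : (k:ℝ) + 1 ≤ n := by exact_mod_cast hk
      linarith
    rw [farey_iter k x hx0 hk1] at hmem
    have hk2 : ((k:ℝ)+2) * x < 1 := by
      have hkn : (k:ℝ) + 2 ≤ n + 1 := by
        have : (k:ℝ) + 1 ≤ n := by exact_mod_cast hk
        linarith
      calc ((k:ℝ)+2) * x ≤ (n+1) * x := by gcongr
      _ < (n+1) * (1/(n+1)) := by gcongr
      _ = 1 := by field_simp
    have hpos : (0:ℝ) < 1 - k * x := by nlinarith
    have := hmem.1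
    rw [le_div_iff₀ hpos] at this
    nlinarith
  · rintro ⟨hxl, hx1⟩
    have hx0 : 0 < x := lt_of_lt_of_le (by positivity) hxl
    refine ⟨?_, hx0, hx1⟩
    by_cases hhalf : 1/2 ≤ x
    · exact ⟨0, hn, by simp only [Function.iterate_zero, id_eq]; exact ⟨hhalf, hx1⟩⟩
    · push_neg at hhalf
      set t : ℝ := 1/x with ht
      have hxt : x * t = 1 := by rw [ht]; field_simp
      have ht2 : 2 < t := by rw [ht, lt_div_iff₀ hx0]; linarith
      have hxl' : (1:ℝ) ≤ x * (n+1) := (div_le_iff₀ (by positivity)).mp hxl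
      have htn : t ≤ n + 1 := by
        rw [ht, div_le_iff₀ hx0]
        nlinarith [hxl']
      set m : ℕ := ⌈t⌉₊ - 2 with hm
      have hc3 : 3 ≤ ⌈t⌉₊ := by
        have h2c : (2:ℕ) < ⌈t⌉₊ := Nat.lt_ceil.mpr (by exact_mod_cast ht2)
        omega
      have hmc : (m:ℝ) + 2 = ⌈t⌉₊ := by
        have : m + 2 = ⌈t⌉₊ := by omega
        exact_mod_cast this
      have hle : t ≤ (m:ℝ) + 2 := hmc ▸ Nat.le_ceil t
      have hgt : (m:ℝ) + 1 < t := by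
        have : (⌈t⌉₊:ℝ) < t + 1 := Nat.ceil_lt_add_one (by linarith)
        linarith [hmc]
      refine ⟨m, ?_, ?_⟩
      · have hcn : ⌈t⌉₊ ≤ n + 1 := Nat.ceil_le.mpr (by exact_mod_cast htn)
        omega
      · apply farey_hit
        · rw [div_le_iff₀ (by positivity)]; nlinarith
        · rw [le_div_iff₀ (by positivity)]; nlinarith

/-- The wandering rate equals `log (n+1)` exactly. -/
lemma farey_wn (n : ℕ) (hn : 1 ≤ n) :
    (fareyMeasure (⋃ k ∈ Finset.range n,
      (fareyMap^[k]) ⁻¹' Set.Icc (1 / 2 : ℝ) 1)).toReal = Real.log (n+1) := by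
  have ha : (0:ℝ) < 1/((n:ℝ)+1) := by positivity
  have ha1 : 1/((n:ℝ)+1) ≤ 1 := by
    rw [div_le_one (by positivity)]
    have : (1:ℝ) ≤ n := by exact_mod_cast hn
    linarith
  rw [fareyMeasure, Measure.restrict_apply' measurableSet_Ioc, farey_union n hn,
    withDensity_apply _ measurableSet_Icc]
  have hcont : ContinuousOn (fun x : ℝ => x⁻¹) (Set.Icc (1/((n:ℝ)+1)) 1) := by
    apply ContinuousOn.inv₀ continuousOn_id
    intro x hx; exact ne_of_gt (lt_of_lt_of_le ha hx.1)
  have hint : IntegrableOn (fun x : ℝ => x⁻¹) (Set.Icc (1/((n:ℝ)+1)) 1) :=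
    hcont.integrableOn_Icc
  have hnn : 0 ≤ᵐ[volume.restrict (Set.Icc (1/((n:ℝ)+1)) 1)] fun x : ℝ => x⁻¹ :=
    Filter.eventually_of_mem (self_mem_ae_restrict measurableSet_Icc)
      (fun x hx => inv_nonneg.mpr (le_of_lt (lt_of_lt_of_le ha hx.1)))
  rw [← ofReal_integral_eq_lintegral_ofReal hint hnn]
  rw [ENNReal.toReal_ofReal (integral_nonneg_of_ae hnn)]
  rw [integral_Icc_eq_integral_Ioc, ← intervalIntegral.integral_of_le ha1,
    integral_inv_of_pos ha one_pos, one_div, one_div, inv_inv]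

/-- The wandering rate of the set `D = [1/2, 1]` for the Farey map with its
infinite invariant measure is logarithmic:
`w_n = μ(⋃_{k=0}^{n-1} F^{-k}(D)) ≍ log n`. -/
theorem fareyMap_wandering_rate_log :
    ∃ c C : ℝ, 0 < c ∧ c ≤ C ∧ ∀ n : ℕ, 2 ≤ n →
      c * Real.log n ≤
        (fareyMeasure (⋃ k ∈ Finset.range n,
          (fareyMap^[k]) ⁻¹' Set.Icc (1 / 2 : ℝ) 1)).toReal ∧
      (fareyMeasure (⋃ k ∈ Finset.range n,
          (fareyMap^[k]) ⁻¹' Set.Icc (1 / 2 : ℝ) 1)).toReal ≤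
        C * Real.log n := by
  refine ⟨1, 2, one_pos, by norm_num, fun n hn => ?_⟩
  rw [farey_wn n (by omega)]
  have hn1 : (2:ℝ) ≤ n := by exact_mod_cast hn
  constructor
  · rw [one_mul]
    apply Real.log_le_log (by linarith)
    linarith
  · calc Real.log ((n:ℝ)+1) ≤ Real.log ((n:ℝ)^2) := by
          apply Real.log_le_log (by linarith)
          nlinarith
    _ = 2 * Real.log n := by
          rw [show ((n:ℝ)^2) = (n:ℝ)^(2:ℕ) by norm_num, Real.log_pow]
          norm_num
end

section
/- For the Farey map F with invariant measure μ of density 1/x on (0,1], and D = [1/2,1], the correlation sums satisfy ∑_{k=0}^{n} μ(D ∩ F^{−k}(D)) ≍ n/log n for n ≥ 2. (This is the key step of the paper's proof, ∑_{k=0}^{n} μ_δ(D ∩ T^{−k}(D)) ≍ ν_n with return sequence ν_n ≍ n/log n in the case δ = (r_max+1)/2, realized for the modular group.) -/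
open MeasureTheory Real

namespace FareyProof

open Set Filter Topology
open scoped ENNReal NNReal

abbrev QS : Set ℝ := Set.range ((↑) : ℚ → ℝ)

/-- Irrational points of `(1/2, 1)`. -/
def Gset : Set ℝ := Set.Ioo (1/2 : ℝ) 1 \ QS

/-- First-return time (to `[1/2,1]`) of `x ∈ (1/2,1)` under the Farey map. -/
noncomputable def nphi (x : ℝ) : ℕ := ⌊(1 - x)⁻¹⌋₊ - 1

/-- Induced (first-return) map on `(1/2,1)`. -/
noncomputable def fR (x : ℝ) : ℝ := (1 - x) / ((nphi x : ℝ) * x - (nphi x : ℝ) + 1)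

/-- Birkhoff sums of the return time along the induced map. -/
noncomputable def tau : ℕ → ℝ → ℕ
  | 0, _ => 0
  | m+1, x => nphi x + tau m (fR x)

lemma measurable_nphi : Measurable nphi :=
  (Nat.measurable_floor.comp ((measurable_const.sub measurable_id).inv)).sub measurable_const

lemma measurable_nphiR : Measurable fun x => (nphi x : ℝ) :=
  measurable_from_top.comp measurable_nphi

lemma measurable_fR : Measurable fR :=
  (measurable_const.sub measurable_id).div
    (((measurable_nphiR.mul measurable_id).sub measurable_nphiR).add measurable_const)

lemma measurable_tau (m : ℕ) : Measurable fun x => tau m x := by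
  induction m with
  | zero => simpa [tau] using measurable_const
  | succ m ih => exact measurable_nphi.add (ih.comp measurable_fR)

lemma measurableSet_Gset : MeasurableSet Gset :=
  measurableSet_Ioo.diff (Set.Countable.measurableSet (Set.countable_range _))

lemma Gset_subset : Gset ⊆ Set.Ioo (1/2 : ℝ) 1 := fun _ h => h.1

lemma irrational_of_mem {x : ℝ} (hx : x ∈ Gset) : Irrational x := hx.2

/-- If `x ∈ (j/(j+1), (j+1)/(j+2))` then `nphi x = j`. -/
lemma nphi_eq {j : ℕ} {x : ℝ} (hj : 1 ≤ j) (h1 : (j:ℝ)/((j:ℝ)+1) < x)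
    (h2 : x < ((j:ℝ)+1)/((j:ℝ)+2)) : nphi x = j := by
  have hj1 : (1:ℝ) ≤ (j:ℝ) := by exact_mod_cast hj
  have hd1 : (0:ℝ) < (j:ℝ)+1 := by linarith
  have hd2 : (0:ℝ) < (j:ℝ)+2 := by linarith
  have h1' : (j:ℝ) < x * ((j:ℝ)+1) := by rwa [div_lt_iff₀ hd1] at h1
  have h2' : x * ((j:ℝ)+2) < (j:ℝ)+1 := by rwa [lt_div_iff₀ hd2] at h2
  have h1x : 0 < 1 - x := by nlinarith
  have key1 : (j:ℝ)+1 < (1-x)⁻¹ := by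
    rw [← one_div, lt_div_iff₀ h1x]; nlinarith
  have key2 : (1-x)⁻¹ < (j:ℝ)+2 := by
    rw [← one_div, div_lt_iff₀ h1x]; nlinarith
  have hfl : ⌊(1-x)⁻¹⌋₊ = j+1 := by
    rw [Nat.floor_eq_iff (by positivity)]
    constructor
    · push_cast; linarith
    · push_cast; linarith
  simp [nphi, hfl]

/-- Membership of the return-time cylinders for irrational points of `(1/2,1)`. -/
lemma nphi_mem {x : ℝ} (hx : x ∈ Gset) :
    1 ≤ nphi x ∧ ((nphi x : ℝ))/((nphi x : ℝ)+1) < x ∧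
      x < ((nphi x : ℝ)+1)/((nphi x : ℝ)+2) := by
  obtain ⟨⟨hx1, hx2⟩, hxq⟩ := hx
  have h1x : 0 < 1 - x := by linarith
  have hirr : Irrational ((1-x)⁻¹) := by
    have : Irrational (1 - x) := by
      have := (Irrational.ratCast_sub (q := 1) hxq)
      simpa using this
    exact this.inv
  set t := (1-x)⁻¹ with ht
  have ht0 : 0 < t := by positivity
  have ht2 : 2 < t := by
    rw [ht, lt_inv_comm₀ (by norm_num) h1x]
    linarith
  set N := ⌊t⌋₊ with hN
  have hN2 : 2 ≤ N := by
    rw [hN, Nat.le_floor_iff ht0.le]; push_cast; linarith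
  have hNle : (N:ℝ) < t := by
    rcases lt_or_eq_of_le (Nat.floor_le ht0.le : (N:ℝ) ≤ t) with h | h
    · exact h
    · exact absurd h.symm (hirr.ne_nat N)
  have hNlt : t < (N:ℝ) + 1 := by
    have := Nat.lt_floor_add_one t
    push_cast at this ⊢; linarith
  have hnphi : nphi x = N - 1 := rfl
  have hcast : ((nphi x : ℕ) : ℝ) = (N:ℝ) - 1 := by
    rw [hnphi, Nat.cast_sub (by omega)]; push_cast; ring
  have hNR : (2:ℝ) ≤ (N:ℝ) := by exact_mod_cast hN2
  refine ⟨by omega, ?_, ?_⟩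
  · rw [hcast]
    have hx' : 1 - x < (N:ℝ)⁻¹ := by
      rw [← inv_inv (1-x), inv_lt_inv₀ (by positivity) (by positivity)]
      exact hNle
    rw [div_lt_iff₀ (by linarith)]
    have : (N:ℝ) * (1 - x) < 1 := by
      have := mul_lt_mul_of_pos_left hx' (show (0:ℝ) < N by linarith)
      rwa [mul_inv_cancel₀ (by linarith)] at this
    nlinarith
  · rw [hcast]
    have hx' : ((N:ℝ)+1)⁻¹ < 1 - x := by
      rw [← inv_inv (1-x), inv_lt_inv₀ (by positivity) (by positivity)]
      exact hNlt
    rw [lt_div_iff₀ (by linarith)]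
    have : 1 < ((N:ℝ)+1) * (1-x) := by
      have := mul_lt_mul_of_pos_left hx' (show (0:ℝ) < (N:ℝ)+1 by linarith)
      rwa [mul_inv_cancel₀ (by linarith)] at this
    nlinarith

lemma nphi_pos {x : ℝ} (hx : x ∈ Gset) : 1 ≤ nphi x := (nphi_mem hx).1


section Dynamics

lemma fR_pos_facts {x : ℝ} (hx : x ∈ Gset) :
    0 < (nphi x : ℝ) * x - (nphi x : ℝ) + 1 ∧ fR x ∈ Set.Ioo (1/2 : ℝ) 1 := by
  obtain ⟨hj, h1, h2⟩ := nphi_mem hx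
  set r := (nphi x : ℝ) with hrdef
  have hr1 : (1:ℝ) ≤ r := by rw [hrdef]; exact_mod_cast hj
  have hd1 : (0:ℝ) < r+1 := by linarith
  have hd2 : (0:ℝ) < r+2 := by linarith
  have h1' : r < x * (r+1) := by rwa [div_lt_iff₀ hd1] at h1
  have h2' : x * (r+2) < r+1 := by rwa [lt_div_iff₀ hd2] at h2
  have hx1 : x < 1 := by nlinarith
  have hden : 0 < r*x - r + 1 := by nlinarith
  refine ⟨hden, ?_, ?_⟩
  · rw [fR, ← hrdef, lt_div_iff₀ hden]; nlinarith
  · rw [fR, ← hrdef, div_lt_one hden]; nlinarith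

lemma fR_mem_Ioo {x : ℝ} (hx : x ∈ Gset) : fR x ∈ Set.Ioo (1/2 : ℝ) 1 :=
  (fR_pos_facts hx).2

lemma fR_irrational {x : ℝ} (hx : x ∈ Gset) : Irrational (fR x) := by
  have hden := (fR_pos_facts hx).1
  rintro ⟨q, hq⟩
  apply hx.2
  have h3 : (q:ℝ) * ((nphi x : ℝ)*x - (nphi x : ℝ) + 1) = 1 - x := by
    rw [hq, fR]
    exact div_mul_cancel₀ _ hden.ne'
  have h4 : ((q:ℝ)*(nphi x : ℝ) + 1) * x = 1 - q + q*(nphi x : ℝ) := by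
    linear_combination h3
  have hne : (q:ℝ)*(nphi x : ℝ) + 1 ≠ 0 := by
    intro h0
    rw [h0] at h4
    have hq0 : (q:ℝ) = 0 := by linarith [h4, h0]
    rw [hq0] at h0; simp at h0
  refine ⟨(1 - q + q * (nphi x : ℚ)) / (q * (nphi x : ℚ) + 1), ?_⟩
  push_cast
  rw [div_eq_iff (by push_cast at hne ⊢; exact hne)]
  linear_combination h4.symm

lemma fR_mem_Gset {x : ℝ} (hx : x ∈ Gset) : fR x ∈ Gset :=
  ⟨fR_mem_Ioo hx, fR_irrational hx⟩

lemma half_lt {x : ℝ} (hx : x ∈ Gset) : 1/2 < x := hx.1.1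

lemma fareyMap_iterate_formula {x : ℝ} (hx : x ∈ Gset) :
    ∀ i : ℕ, 1 ≤ i → i ≤ nphi x →
      fareyMap^[i] x = (1 - x)/((i:ℝ)*x - (i:ℝ) + 1) := by
  obtain ⟨hj, h1, h2⟩ := nphi_mem hx
  set r := (nphi x : ℝ) with hrdef
  have hr1 : (1:ℝ) ≤ r := by rw [hrdef]; exact_mod_cast hj
  have hd1 : (0:ℝ) < r+1 := by linarith
  have h1' : r < x * (r+1) := by rwa [div_lt_iff₀ hd1] at h1
  have h2' : x * (r+2) < r+1 := by rwa [lt_div_iff₀ (by linarith)] at h2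
  have hx1 : x < 1 := by nlinarith
  have hhalf : 1/2 < x := half_lt hx
  intro i
  induction i with
  | zero => omega
  | succ n ih =>
    intro _ hsucc
    have hsr : ((n:ℝ) + 1) ≤ r := by
      rw [hrdef]
      have : (((n+1 : ℕ)) : ℝ) ≤ ((nphi x : ℕ) : ℝ) := by exact_mod_cast hsucc
      push_cast at this; linarith
    by_cases hn : n = 0
    · subst hn
      simp only [zero_add, Function.iterate_one]
      rw [fareyMap, if_neg (by push_cast; linarith)]
      push_cast; ring_nf
    · have hn1 : 1 ≤ n := Nat.one_le_iff_ne_zero.2 hn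
      have hnj : n ≤ nphi x := le_trans (Nat.le_succ n) hsucc
      have ihn := ih hn1 hnj
      set s := (n:ℝ) with hsdef
      have hs1 : (1:ℝ) ≤ s := by rw [hsdef]; exact_mod_cast hn1
      have hdenn : 0 < s*x - s + 1 := by nlinarith
      have hzle : (1 - x)/(s*x - s + 1) ≤ 1/2 := by
        rw [div_le_iff₀ hdenn]; nlinarith
      have hzpos : 0 < (1 - x)/(s*x - s + 1) := div_pos (by linarith) hdenn
      rw [Function.iterate_succ_apply', ihn, fareyMap, if_pos (by linarith)]
      have hne2 : (0:ℝ) < (s+1)*x - s := by nlinarith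
      have hz1 : 1 - (1 - x)/(s*x - s + 1) = ((s+1)*x - s)/(s*x - s + 1) := by
        rw [one_sub_div hdenn.ne']; congr 1; ring
      have key : (1 - x)/(s*x - s + 1) / (((s+1)*x - s)/(s*x - s + 1))
          = (1 - x)/((s+1)*x - s) := by
        rw [div_div_div_cancel_right₀ hdenn.ne']
      rw [hz1, key]
      push_cast
      rw [hsdef]; ring_nf

lemma fareyMap_iterate_small {x : ℝ} (hx : x ∈ Gset) {i : ℕ} (hi1 : 1 ≤ i)
    (hij : i < nphi x) : fareyMap^[i] x ∉ Set.Icc (1/2 : ℝ) 1 := by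
  obtain ⟨hj, h1, h2⟩ := nphi_mem hx
  set r := (nphi x : ℝ) with hrdef
  have hr1 : (1:ℝ) ≤ r := by rw [hrdef]; exact_mod_cast hj
  have h1' : r < x * (r+1) := by rwa [div_lt_iff₀ (by linarith)] at h1
  have h2' : x * (r+2) < r+1 := by rwa [lt_div_iff₀ (by linarith)] at h2
  have hx1 : x < 1 := by nlinarith
  have hform := fareyMap_iterate_formula hx i hi1 (le_of_lt hij)
  set s := (i:ℝ) with hsdef
  have hs1 : (1:ℝ) ≤ s := by rw [hsdef]; exact_mod_cast hi1
  have hsr : s + 1 ≤ r := by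
    rw [hsdef, hrdef]
    have : ((i+1 : ℕ) : ℝ) ≤ ((nphi x : ℕ) : ℝ) := by exact_mod_cast hij
    push_cast at this; linarith
  have hdenn : 0 < s*x - s + 1 := by nlinarith
  have hlt : (1 - x)/(s*x - s + 1) < 1/2 := by
    rw [div_lt_iff₀ hdenn]; nlinarith
  rw [hform]
  intro hmem
  have := hmem.1
  linarith

lemma fR_eq_iterate {x : ℝ} (hx : x ∈ Gset) : fareyMap^[nphi x] x = fR x := by
  rw [fareyMap_iterate_formula hx (nphi x) (nphi_pos hx) le_rfl, fR]

lemma tau_lt_succ {x : ℝ} (hx : x ∈ Gset) (m : ℕ) : tau m x < tau (m+1) x := by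
  induction m generalizing x with
  | zero =>
    have := nphi_pos hx
    simp only [tau]; omega
  | succ m ih =>
    have := ih (fR_mem_Gset hx)
    simp only [tau] at this ⊢; omega

lemma tau_strictMono {x : ℝ} (hx : x ∈ Gset) : StrictMono (fun m => tau m x) :=
  strictMono_nat_of_lt_succ (tau_lt_succ hx)

lemma le_tau {x : ℝ} (hx : x ∈ Gset) (m : ℕ) : m ≤ tau m x := by
  induction m with
  | zero => omega
  | succ m ih => have := tau_lt_succ hx m; omega

lemma visits : ∀ k : ℕ, ∀ x ∈ Gset,
    (fareyMap^[k] x ∈ Set.Icc (1/2 : ℝ) 1 ↔ ∃ m, tau m x = k) := by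
  intro k
  induction k using Nat.strong_induction_on with
  | _ k ih =>
    intro x hx
    rcases Nat.eq_zero_or_pos k with hk0 | hk1
    · subst hk0
      simp only [Function.iterate_zero, id_eq]
      constructor
      · intro _; exact ⟨0, rfl⟩
      · intro _; exact ⟨le_of_lt (half_lt hx), le_of_lt hx.1.2⟩
    · set j := nphi x with hjdef
      have hj1 : 1 ≤ j := nphi_pos hx
      rcases lt_or_ge k j with hkj | hjk
      · constructor
        · intro hmem
          exact absurd hmem (fareyMap_iterate_small hx hk1 hkj)
        · rintro ⟨m, hm⟩
          exfalso
          match m with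
          | 0 => have ht : tau 0 x = 0 := rfl; omega
          | m'+1 =>
            have ht : tau (m'+1) x = nphi x + tau m' (fR x) := rfl
            omega
      · have hiter : fareyMap^[k] x = fareyMap^[k - j] (fR x) := by
          conv_lhs => rw [← Nat.sub_add_cancel hjk]
          rw [Function.iterate_add_apply, fR_eq_iterate hx]
        have hrec := ih (k - j) (by omega) (fR x) (fR_mem_Gset hx)
        rw [hiter, hrec]
        constructor
        · rintro ⟨m, hm⟩
          refine ⟨m+1, ?_⟩
          have ht : tau (m+1) x = nphi x + tau m (fR x) := rfl
          omega
        · rintro ⟨m, hm⟩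
          match m with
          | 0 => have ht : tau 0 x = 0 := rfl; omega
          | m'+1 =>
            refine ⟨m', ?_⟩
            have ht : tau (m'+1) x = nphi x + tau m' (fR x) := rfl
            omega

open Classical in
lemma count_eq {x : ℝ} (hx : x ∈ Gset) (n : ℕ) :
    (∑ k ∈ Finset.range (n+1), if fareyMap^[k] x ∈ Set.Icc (1/2:ℝ) 1 then (1:ENNReal) else 0)
      = ∑ m ∈ Finset.range (n+1), if tau m x ≤ n then (1:ENNReal) else 0 := by
  rw [Finset.sum_boole, Finset.sum_boole]
  norm_cast
  apply (Finset.card_bij (fun m _ => tau m x) ?_ ?_ ?_).symm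
  · intro m hm
    simp only [Finset.mem_filter, Finset.mem_range] at hm ⊢
    exact ⟨by omega, (visits (tau m x) x hx).2 ⟨m, rfl⟩⟩
  · intro a ha b hb hab
    exact (tau_strictMono hx).injective hab
  · intro k hk
    simp only [Finset.mem_filter, Finset.mem_range] at hk
    obtain ⟨m, hm⟩ := (visits k x hx).1 hk.2
    refine ⟨m, ?_, hm⟩
    simp only [Finset.mem_filter, Finset.mem_range]
    have := le_tau hx m
    omega

end Dynamics

section MeasureBasics

lemma volume_QS : volume QS = 0 := (Set.countable_range _).measure_zero _

lemma Gset_subset_Ioc : Gset ⊆ Set.Ioc 0 1 :=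
  fun x hx => ⟨by have := hx.1.1; linarith, le_of_lt hx.1.2⟩

lemma fareyMeasure_ac : fareyMeasure ≪ (volume : Measure ℝ) :=
  (Measure.absolutelyContinuous_of_le Measure.restrict_le_self).trans
    (withDensity_absolutelyContinuous volume _)

/-- The reference measure: `fareyMeasure` restricted to the irrationals of `(1/2,1)`. -/
noncomputable def muG : Measure ℝ := fareyMeasure.restrict Gset

lemma muG_eq : muG = (volume.restrict Gset).withDensity fun x => ENNReal.ofReal x⁻¹ := by
  rw [muG, fareyMeasure, Measure.restrict_restrict measurableSet_Gset,
    Set.inter_eq_left.2 Gset_subset_Ioc, restrict_withDensity measurableSet_Gset]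

lemma measurable_density : Measurable fun x : ℝ => ENNReal.ofReal x⁻¹ :=
  ENNReal.measurable_ofReal.comp measurable_inv

lemma muG_lintegral (f : ℝ → ℝ≥0∞) :
    ∫⁻ x, f x ∂muG = ∫⁻ x in Gset, ENNReal.ofReal x⁻¹ * f x ∂volume := by
  rw [muG_eq, lintegral_withDensity_eq_lintegral_mul_non_measurable _ measurable_density
    (ae_of_all _ fun x => ENNReal.ofReal_lt_top)]
  rfl

lemma muG_set_eq {s : Set ℝ} (hs : MeasurableSet s) :
    muG s = ∫⁻ x in Gset ∩ s, ENNReal.ofReal x⁻¹ ∂volume := by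
  rw [muG_eq, withDensity_apply _ hs, Measure.restrict_restrict hs, Set.inter_comm]

lemma lint_diff_QS (f : ℝ → ℝ≥0∞) (s : Set ℝ) :
    ∫⁻ x in s \ QS, f x ∂volume = ∫⁻ x in s, f x ∂volume :=
  setLIntegral_congr (diff_ae_eq_self.2 (measure_mono_null Set.inter_subset_right volume_QS))

lemma lint_inv_Ioo {a b : ℝ} (ha : 0 < a) (hab : a ≤ b) :
    ∫⁻ x in Set.Ioo a b, ENNReal.ofReal x⁻¹ ∂volume
      = ENNReal.ofReal (Real.log b - Real.log a) := by
  have hb : 0 < b := lt_of_lt_of_le ha hab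
  have hcont : ContinuousOn (fun x : ℝ => x⁻¹) (Set.Icc a b) :=
    continuousOn_id.inv₀ fun x hx => ne_of_gt (lt_of_lt_of_le ha hx.1)
  have hInt : IntegrableOn (fun x : ℝ => x⁻¹) (Set.Ioo a b) :=
    (hcont.integrableOn_Icc).mono_set Set.Ioo_subset_Icc_self
  have hnn : 0 ≤ᵐ[volume.restrict (Set.Ioo a b)] fun x : ℝ => x⁻¹ := by
    rw [EventuallyLE, ae_restrict_iff' measurableSet_Ioo]
    exact ae_of_all _ fun x hx => inv_nonneg.2 (le_of_lt (lt_trans ha hx.1))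
  rw [← ofReal_integral_eq_lintegral_ofReal hInt hnn]
  congr 1
  rw [← MeasureTheory.integral_Ioc_eq_integral_Ioo, ← intervalIntegral.integral_of_le hab,
    integral_inv (by rw [Set.uIcc_of_le hab]; intro h; exact absurd h.1 (by linarith)),
    Real.log_div (ne_of_gt hb) (ne_of_gt ha)]

lemma frac_mono {r s : ℝ} (h0 : 0 ≤ r) (hrs : r ≤ s) : r/(r+1) ≤ s/(s+1) := by
  rw [div_le_div_iff₀ (by linarith) (by linarith)]; nlinarith

lemma frac_half {r : ℝ} (h1 : 1 ≤ r) : 1/2 ≤ r/(r+1) := by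
  rw [div_le_div_iff₀ (by norm_num) (by linarith)]; nlinarith

lemma nphi_ge_iff {t : ℕ} (ht : 1 ≤ t) {x : ℝ} (hx : x ∈ Gset) :
    t ≤ nphi x ↔ (t:ℝ)/((t:ℝ)+1) < x := by
  obtain ⟨hj, h1, h2⟩ := nphi_mem hx
  constructor
  · intro h
    have := frac_mono (r := (t:ℝ)) (s := (nphi x : ℝ)) (by positivity) (by exact_mod_cast h)
    linarith
  · intro h
    by_contra hlt
    push_neg at hlt
    have hle : nphi x + 1 ≤ t := hlt
    have hcast : ((nphi x : ℝ)+1) ≤ (t:ℝ) := by exact_mod_cast hle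
    have := frac_mono (r := (nphi x : ℝ)+1) (s := (t:ℝ)) (by positivity) hcast
    have h2' : x < ((nphi x : ℝ)+1)/(((nphi x : ℝ)+1)+1) := by
      have : ((nphi x:ℝ)+1)+1 = (nphi x:ℝ)+2 := by ring
      rw [this]; exact h2
    linarith

lemma measurableSet_nphi_ge (t : ℕ) : MeasurableSet {x : ℝ | t ≤ nphi x} :=
  measurable_nphi measurableSet_Ici

lemma muG_nphi_ge (t : ℕ) (ht : 1 ≤ t) :
    muG {x | t ≤ nphi x}
      = ENNReal.ofReal (Real.log ((t:ℝ)+1) - Real.log t) := by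
  have htR : (1:ℝ) ≤ (t:ℝ) := by exact_mod_cast ht
  have hset : Gset ∩ {x | t ≤ nphi x} = Set.Ioo ((t:ℝ)/((t:ℝ)+1)) 1 \ QS := by
    ext x
    constructor
    · rintro ⟨hxG, hx⟩
      exact ⟨⟨(nphi_ge_iff ht hxG).1 hx, hxG.1.2⟩, hxG.2⟩
    · rintro ⟨⟨hx1, hx2⟩, hq⟩
      have hxG : x ∈ Gset := ⟨⟨lt_of_le_of_lt (frac_half htR) hx1, hx2⟩, hq⟩
      exact ⟨hxG, (nphi_ge_iff ht hxG).2 hx1⟩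
  rw [muG_set_eq (measurableSet_nphi_ge t), hset, lint_diff_QS,
    lint_inv_Ioo (by positivity) (by rw [div_le_one (by linarith)]; linarith)]
  congr 1
  rw [Real.log_div (by linarith) (by linarith), Real.log_one]
  ring

lemma muG_univ : muG Set.univ = ENNReal.ofReal (Real.log 2) := by
  rw [muG_set_eq MeasurableSet.univ, Set.inter_univ, Gset, lint_diff_QS,
    lint_inv_Ioo (by norm_num) (by norm_num)]
  rw [Real.log_one, one_div, Real.log_inv]
  norm_num

lemma muG_fin {s : Set ℝ} : muG s ≤ ENNReal.ofReal (Real.log 2) := by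
  rw [← muG_univ]; exact measure_mono (Set.subset_univ s)

end MeasureBasics

section CoV

/-- Inverse branch `i` (`i = 0, 1, 2, ...`) of the induced map `fR`. -/
noncomputable def wmap (i : ℕ) (y : ℝ) : ℝ := ((i:ℝ)*y + 1)/(((i:ℝ)+1)*y + 1)

/-- Cylinder `i` : points with `nphi = i+1`. -/
def cylSet (i : ℕ) : Set ℝ :=
  Set.Ioo (((i:ℝ)+1)/((i:ℝ)+2)) (((i:ℝ)+2)/((i:ℝ)+3)) \ QS

lemma measurableSet_cylSet (i : ℕ) : MeasurableSet (cylSet i) :=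
  measurableSet_Ioo.diff (Set.Countable.measurableSet (Set.countable_range _))

lemma nphi_eq' (i : ℕ) {x : ℝ} (h1 : ((i:ℝ)+1)/((i:ℝ)+2) < x)
    (h2 : x < ((i:ℝ)+2)/((i:ℝ)+3)) : nphi x = i + 1 := by
  apply nphi_eq (j := i+1) (by omega)
  · push_cast; convert h1 using 2 <;> ring
  · push_cast; convert h2 using 2 <;> ring

lemma cylSet_subset_Gset (i : ℕ) : cylSet i ⊆ Gset := by
  rintro x ⟨⟨hx1, hx2⟩, hq⟩
  have h0 : (0:ℝ) ≤ (i:ℝ) := Nat.cast_nonneg i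
  have h1 : (1:ℝ) ≤ (i:ℝ)+1 := by linarith
  have hlt : ((i:ℝ)+2)/((i:ℝ)+3) < 1 := by
    rw [div_lt_one (by positivity)]; linarith
  have hh : (1:ℝ)/2 ≤ ((i:ℝ)+1)/((i:ℝ)+2) := by
    rw [show (i:ℝ)+2 = ((i:ℝ)+1)+1 by ring]
    exact frac_half h1
  exact ⟨⟨lt_of_le_of_lt hh hx1, lt_trans hx2 hlt⟩, hq⟩

lemma nphi_cylSet {i : ℕ} {x : ℝ} (hx : x ∈ cylSet i) : nphi x = i + 1 :=
  nphi_eq' i hx.1.1 hx.1.2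

lemma Gset_iUnion : Gset = ⋃ i : ℕ, cylSet i := by
  ext x
  simp only [Set.mem_iUnion]
  constructor
  · intro hx
    obtain ⟨hj, h1, h2⟩ := nphi_mem hx
    refine ⟨nphi x - 1, ⟨?_, ?_⟩, hx.2⟩
    · have hc : ((nphi x - 1 : ℕ) : ℝ) = (nphi x : ℝ) - 1 := by
        rw [Nat.cast_sub hj]; norm_num
      rw [hc]; rwa [show ((nphi x:ℝ) - 1 + 1)/((nphi x:ℝ) - 1 + 2) = (nphi x:ℝ)/((nphi x:ℝ)+1) by ring]
    · have hc : ((nphi x - 1 : ℕ) : ℝ) = (nphi x : ℝ) - 1 := by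
        rw [Nat.cast_sub hj]; norm_num
      rw [hc]; rwa [show ((nphi x:ℝ) - 1 + 2)/((nphi x:ℝ) - 1 + 3) = ((nphi x:ℝ)+1)/((nphi x:ℝ)+2) by ring]
  · rintro ⟨i, hi⟩
    exact cylSet_subset_Gset i hi

lemma cyl_disjoint : Pairwise (Function.onFun Disjoint cylSet) := by
  intro a b hab
  rw [Function.onFun, Set.disjoint_left]
  intro x hxa hxb
  exact hab (by
    have h1 := nphi_cylSet hxa
    have h2 := nphi_cylSet hxb
    omega)

lemma wmap_mem (i : ℕ) {y : ℝ} (hy : y ∈ Set.Ioo (1/2:ℝ) 1) :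
    wmap i y ∈ Set.Ioo (((i:ℝ)+1)/((i:ℝ)+2)) (((i:ℝ)+2)/((i:ℝ)+3)) := by
  obtain ⟨hy1, hy2⟩ := hy
  have hden : (0:ℝ) < ((i:ℝ)+1)*y + 1 := by positivity
  constructor
  · rw [wmap, div_lt_div_iff₀ (by positivity) hden]; nlinarith
  · rw [wmap, div_lt_div_iff₀ hden (by positivity)]; nlinarith

lemma nphi_wmap (i : ℕ) {y : ℝ} (hy : y ∈ Set.Ioo (1/2:ℝ) 1) :
    nphi (wmap i y) = i + 1 :=
  nphi_eq' i (wmap_mem i hy).1 (wmap_mem i hy).2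

lemma fR_wmap (i : ℕ) {y : ℝ} (hy : y ∈ Set.Ioo (1/2:ℝ) 1) : fR (wmap i y) = y := by
  have hy0 : (0:ℝ) < y := by have := hy.1; linarith
  have hden : (0:ℝ) < ((i:ℝ)+1)*y + 1 := by positivity
  have hc : ((i+1 : ℕ):ℝ) = (i:ℝ)+1 := by push_cast; ring
  have hv : ((i:ℝ)+1) * wmap i y - ((i:ℝ)+1) + 1 = (((i:ℝ)+1)*y+1)⁻¹ := by
    rw [wmap]; field_simp; ring
  have h1v : 1 - wmap i y = y / (((i:ℝ)+1)*y+1) := by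
    rw [wmap]; field_simp; ring
  rw [fR, nphi_wmap i hy, hc, hv, h1v, div_inv_eq_mul, div_mul_cancel₀ _ hden.ne']

lemma wmap_irrational (i : ℕ) {y : ℝ} (hy : y ∈ Gset) : wmap i y ∉ QS := by
  rintro ⟨q, hq⟩
  apply hy.2
  have h1 : fR (wmap i y) = y := fR_wmap i hy.1
  have hnphi : nphi (wmap i y) = i + 1 := nphi_wmap i hy.1
  rw [fR, hnphi] at h1
  have hc : ((i+1 : ℕ):ℝ) = (i:ℝ)+1 := by push_cast; ring
  rw [hc] at h1
  refine ⟨(1 - q)/(((i:ℚ)+1)*q - ((i:ℚ)+1) + 1), ?_⟩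
  push_cast
  rw [hq]
  exact h1

lemma wmap_image (i : ℕ) : wmap i '' Gset = cylSet i := by
  ext z
  constructor
  · rintro ⟨y, hy, rfl⟩
    exact ⟨wmap_mem i hy.1, wmap_irrational i hy⟩
  · rintro ⟨hz, hzq⟩
    have hzG : z ∈ Gset := cylSet_subset_Gset i ⟨hz, hzq⟩
    have hnz : nphi z = i + 1 := nphi_eq' i hz.1 hz.2
    refine ⟨fR z, fR_mem_Gset hzG, ?_⟩
    have hden := (fR_pos_facts hzG).1
    rw [hnz] at hden
    push_cast at hden
    have hc : ((nphi z : ℕ):ℝ) = (i:ℝ)+1 := by rw [hnz]; push_cast; ring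
    have e1 : ((i:ℝ)+1) * fR z + 1 = (((i:ℝ)+1)*z - ((i:ℝ)+1) + 1)⁻¹ := by
      have := mul_inv_cancel₀ hden.ne'
      rw [fR, hc, div_eq_mul_inv]; linear_combination -this
    have e2 : (i:ℝ) * fR z + 1 = z * (((i:ℝ)+1)*z - ((i:ℝ)+1) + 1)⁻¹ := by
      have := mul_inv_cancel₀ hden.ne'
      rw [fR, hc, div_eq_mul_inv]; linear_combination -this
    have hdne : (((i:ℝ)+1)*z - ((i:ℝ)+1) + 1) ≠ 0 := by linarith
    rw [wmap, e1, e2, mul_div_assoc, div_self (inv_ne_zero hdne), mul_one]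

end CoV

section Transfer

lemma lintegral_image_1d {s : Set ℝ} {f f' : ℝ → ℝ} (hs : MeasurableSet s)
    (hf' : ∀ x ∈ s, HasDerivWithinAt f (f' x) s x) (hf : Set.InjOn f s) (g : ℝ → ℝ≥0∞) :
    ∫⁻ x in f '' s, g x ∂volume = ∫⁻ x in s, ENNReal.ofReal |f' x| * g (f x) ∂volume := by
  simpa only [ContinuousLinearMap.det_toSpanSingleton] using
    MeasureTheory.lintegral_image_eq_lintegral_abs_det_fderiv_mul volume hs
      (fun x hx => (hf' x hx).hasFDerivWithinAt) hf g

lemma wmap_hasDeriv (i : ℕ) {y : ℝ} (hy : 0 < y) :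
    HasDerivAt (wmap i) (-(((((i:ℝ)+1)*y+1))^2)⁻¹) y := by
  have hden : (((i:ℝ)+1)*y + 1) ≠ 0 := by positivity
  have h1 : HasDerivAt (fun y : ℝ => (i:ℝ)*y + 1) (i:ℝ) y := by
    simpa using ((hasDerivAt_id y).const_mul (i:ℝ)).add_const 1
  have h2 : HasDerivAt (fun y : ℝ => ((i:ℝ)+1)*y + 1) ((i:ℝ)+1) y := by
    simpa using ((hasDerivAt_id y).const_mul ((i:ℝ)+1)).add_const 1
  have := h1.fun_div h2 hden
  refine this.congr_deriv ?_
  field_simp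
  ring

lemma wmap_injOn (i : ℕ) : Set.InjOn (wmap i) Gset := by
  intro a ha b hb h
  have ha0 : (0:ℝ) < a := lt_trans (by norm_num) ha.1.1
  have hb0 : (0:ℝ) < b := lt_trans (by norm_num) hb.1.1
  have hda : (0:ℝ) < ((i:ℝ)+1)*a + 1 := by positivity
  have hdb : (0:ℝ) < ((i:ℝ)+1)*b + 1 := by positivity
  rw [wmap, wmap, div_eq_div_iff hda.ne' hdb.ne'] at h
  linear_combination -h

lemma cov (i : ℕ) (g : ℝ → ℝ≥0∞) :
    ∫⁻ x in cylSet i, ENNReal.ofReal x⁻¹ * g (fR x) ∂volume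
      = ∫⁻ y in Gset,
          ENNReal.ofReal ((((i:ℝ)+1)*y+1) * ((i:ℝ)*y+1))⁻¹ * g y ∂volume := by
  rw [← wmap_image i,
    lintegral_image_1d measurableSet_Gset
      (fun y hy => (wmap_hasDeriv i (lt_trans (by norm_num) hy.1.1)).hasDerivWithinAt)
      (wmap_injOn i) (fun x => ENNReal.ofReal x⁻¹ * g (fR x))]
  apply setLIntegral_congr_fun measurableSet_Gset
  intro y hy
  dsimp only
  have hy0 : (0:ℝ) < y := lt_trans (by norm_num) hy.1.1
  have hd1 : (0:ℝ) < ((i:ℝ)+1)*y + 1 := by positivity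
  have hd0 : (0:ℝ) < (i:ℝ)*y + 1 := by positivity
  rw [fR_wmap i hy.1, ← mul_assoc]
  congr 1
  rw [abs_neg, abs_of_pos (by positivity), ← ENNReal.ofReal_mul (by positivity)]
  congr 1
  rw [wmap, inv_div]
  field_simp
  try ring

/-- The basic transfer-operator identity for the induced map. -/
lemma transfer (a : ℕ → ℝ≥0∞) (ha : ∀ i, a i ≠ ⊤) (g : ℝ → ℝ≥0∞) (hg : Measurable g) :
    ∫⁻ x, a (nphi x) * g (fR x) ∂muG
      = ∫⁻ y in Gset,
          (∑' i : ℕ, a (i+1) * ENNReal.ofReal ((((i:ℝ)+1)*y+1) * ((i:ℝ)*y+1))⁻¹) * g y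
          ∂volume := by
  rw [muG_lintegral]
  conv_lhs => rw [Gset_iUnion]
  rw [lintegral_iUnion measurableSet_cylSet cyl_disjoint]
  have hpiece : ∀ i : ℕ,
      ∫⁻ x in cylSet i, ENNReal.ofReal x⁻¹ * (a (nphi x) * g (fR x)) ∂volume
        = ∫⁻ y in Gset,
            a (i+1) * (ENNReal.ofReal ((((i:ℝ)+1)*y+1) * ((i:ℝ)*y+1))⁻¹ * g y) ∂volume := by
    intro i
    have h1 : ∫⁻ x in cylSet i, ENNReal.ofReal x⁻¹ * (a (nphi x) * g (fR x)) ∂volume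
        = ∫⁻ x in cylSet i, a (i+1) * (ENNReal.ofReal x⁻¹ * g (fR x)) ∂volume := by
      apply setLIntegral_congr_fun (measurableSet_cylSet i)
      intro x hx
      dsimp only
      rw [nphi_cylSet hx]
      ring
    rw [h1, lintegral_const_mul' _ _ (ha (i+1)), cov i g,
      ← lintegral_const_mul' _ _ (ha (i+1))]
  simp_rw [hpiece]
  rw [← lintegral_tsum]
  · apply setLIntegral_congr_fun measurableSet_Gset
    intro y _
    dsimp only
    rw [← ENNReal.tsum_mul_right]
    apply tsum_congr
    intro i
    exact (mul_assoc _ _ _).symm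
  · intro i
    have hm : Measurable fun y : ℝ => ((((i:ℝ)+1)*y+1) * ((i:ℝ)*y+1))⁻¹ :=
      (((measurable_const.mul measurable_id).add measurable_const).mul
        ((measurable_const.mul measurable_id).add measurable_const)).inv
    exact ((measurable_const.mul (hm.ennreal_ofReal.mul hg)).aemeasurable).restrict

end Transfer

section Telescope

lemma hasSum_w {y : ℝ} (hy : 0 < y) :
    HasSum (fun i : ℕ => ((((i:ℝ)+1)*y+1) * ((i:ℝ)*y+1))⁻¹) y⁻¹ := by
  have hterm : ∀ i : ℕ, ((((i:ℝ)+1)*y+1) * ((i:ℝ)*y+1))⁻¹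
      = y⁻¹ * ((((i:ℝ))*y+1)⁻¹ - (((i:ℝ)+1)*y+1)⁻¹) := by
    intro i
    have d1 : (0:ℝ) < (i:ℝ)*y+1 := by positivity
    have d2 : (0:ℝ) < ((i:ℝ)+1)*y+1 := by positivity
    field_simp
    ring
  have hnn : ∀ i : ℕ, 0 ≤ (((i:ℝ))*y+1)⁻¹ - (((i:ℝ)+1)*y+1)⁻¹ := by
    intro i
    have d1 : (0:ℝ) < (i:ℝ)*y+1 := by positivity
    have hle : ((i:ℝ))*y+1 ≤ ((i:ℝ)+1)*y+1 := by nlinarith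
    have := inv_anti₀ d1 hle
    linarith
  have hps : ∀ N : ℕ, ∑ i ∈ Finset.range N,
      ((((i:ℝ))*y+1)⁻¹ - (((i:ℝ)+1)*y+1)⁻¹) = 1 - ((N:ℝ)*y+1)⁻¹ := by
    intro N
    have h := Finset.sum_range_sub' (f := fun i : ℕ => (((i:ℝ))*y+1)⁻¹) N
    push_cast at h
    simpa using h
  have hlim : Tendsto (fun N : ℕ => ((N:ℝ)*y+1)⁻¹) atTop (nhds 0) := by
    apply tendsto_inv_atTop_zero.comp
    apply tendsto_atTop_add_const_right
    exact tendsto_natCast_atTop_atTop.atTop_mul_const hy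
  have h1 : HasSum (fun i : ℕ => ((((i:ℝ))*y+1)⁻¹ - (((i:ℝ)+1)*y+1)⁻¹)) 1 := by
    rw [hasSum_iff_tendsto_nat_of_nonneg hnn]
    simp only [hps]
    simpa using tendsto_const_nhds.sub hlim
  have h2 := h1.mul_left y⁻¹
  rw [mul_one] at h2
  simpa only [← hterm] using h2

lemma summable_w {y : ℝ} (hy : 0 < y) :
    Summable (fun i : ℕ => ((((i:ℝ)+1)*y+1) * ((i:ℝ)*y+1))⁻¹) := (hasSum_w hy).summable

lemma tsum_w_ennreal {y : ℝ} (hy : 0 < y) :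
    (∑' i : ℕ, ENNReal.ofReal ((((i:ℝ)+1)*y+1) * ((i:ℝ)*y+1))⁻¹)
      = ENNReal.ofReal y⁻¹ := by
  rw [← ENNReal.ofReal_tsum_of_nonneg (fun i => by positivity) (summable_w hy),
    (hasSum_w hy).tsum_eq]

lemma invariance (g : ℝ → ℝ≥0∞) (hg : Measurable g) :
    ∫⁻ x, g (fR x) ∂muG = ∫⁻ x, g x ∂muG := by
  have h := transfer (fun _ => 1) (fun _ => ENNReal.one_ne_top) g hg
  simp only [one_mul] at h
  rw [h, muG_lintegral]
  apply setLIntegral_congr_fun measurableSet_Gset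
  intro y hy
  dsimp only
  have hy0 : (0:ℝ) < y := lt_trans (by norm_num) hy.1.1
  rw [tsum_w_ennreal hy0]

end Telescope

section Upper

noncomputable def rho (n : ℕ) : ℝ := 1 - (Real.log ((n:ℝ)+2) - Real.log 2)/(4*n)

lemma rho_nonneg {n : ℕ} (hn : 1 ≤ n) : 0 ≤ rho n := by
  have hnR : (1:ℝ) ≤ (n:ℝ) := by exact_mod_cast hn
  have h1 : Real.log ((n:ℝ)+2) ≤ (n:ℝ)+1 := by
    have := Real.log_le_sub_one_of_pos (show (0:ℝ) < (n:ℝ)+2 by linarith)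
    linarith
  have h2 : (0:ℝ) ≤ Real.log 2 := Real.log_nonneg (by norm_num)
  rw [rho, sub_nonneg, div_le_one (by linarith)]
  linarith

lemma rho_gap {n : ℕ} (hn : 1 ≤ n) :
    0 < Real.log ((n:ℝ)+2) - Real.log 2 := by
  have hnR : (1:ℝ) ≤ (n:ℝ) := by exact_mod_cast hn
  have := Real.log_lt_log (show (0:ℝ) < 2 by norm_num) (show (2:ℝ) < (n:ℝ)+2 by linarith)
  linarith

lemma one_sub_exp_ge {t : ℝ} (h0 : 0 ≤ t) (h1 : t ≤ 1) : t/2 ≤ 1 - Real.exp (-t) := by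
  have hexp : Real.exp (-t) ≤ (1+t)⁻¹ := by
    rw [Real.exp_neg]
    apply inv_anti₀ (by linarith)
    linarith [Real.add_one_le_exp t]
  have h3 : (1:ℝ) - (1+t)⁻¹ = t/(1+t) := by field_simp; ring
  have h4 : t/2 ≤ t/(1+t) := by
    rcases eq_or_lt_of_le h0 with h | h
    · simp [← h]
    · rw [div_le_div_iff₀ (by norm_num) (by linarith)]; nlinarith
  linarith

lemma kernel_bound (n : ℕ) (hn : 1 ≤ n) {y : ℝ} (hy : y ∈ Set.Ioo (1/2:ℝ) 1) :
    (∑' i : ℕ, ENNReal.ofReal (Real.exp (-((i:ℝ)+1)/(n:ℝ))) *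
        ENNReal.ofReal ((((i:ℝ)+1)*y+1) * ((i:ℝ)*y+1))⁻¹)
      ≤ ENNReal.ofReal (rho n) * ENNReal.ofReal y⁻¹ := by
  obtain ⟨hy1, hy2⟩ := hy
  have hy0 : (0:ℝ) < y := by linarith
  have hnR : (1:ℝ) ≤ (n:ℝ) := by exact_mod_cast hn
  set w : ℕ → ℝ := fun i => ((((i:ℝ)+1)*y+1) * ((i:ℝ)*y+1))⁻¹ with hw
  set u : ℕ → ℝ := fun i => Real.exp (-((i:ℝ)+1)/(n:ℝ)) * w i with hu
  have hw_pos : ∀ i, 0 < w i := fun i => by rw [hw]; positivity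
  have hu_nonneg : ∀ i, 0 ≤ u i := fun i => by
    rw [hu]; exact mul_nonneg (Real.exp_nonneg _) (hw_pos i).le
  have hu_le_w : ∀ i, u i ≤ w i := by
    intro i
    rw [hu]
    have hiR : (0:ℝ) ≤ (i:ℝ)+1 := by positivity
    have : Real.exp (-((i:ℝ)+1)/(n:ℝ)) ≤ 1 :=
      Real.exp_le_one_iff.2 (div_nonpos_of_nonpos_of_nonneg (by linarith) (by linarith))
    nlinarith [hw_pos i]
  have hw_sum : Summable w := summable_w hy0
  have hu_sum : Summable u := Summable.of_nonneg_of_le hu_nonneg hu_le_w hw_sum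
  have hwu_sum : Summable (fun i => w i - u i) := hw_sum.sub hu_sum
  -- lower bound for the defect
  have hterm : ∀ i : ℕ, i < n → 1/(2*(n:ℝ)) * (((i:ℝ)+2)⁻¹) ≤ w i - u i := by
    intro i hi
    have hiR : ((i:ℝ)+1) ≤ (n:ℝ) := by exact_mod_cast hi
    have ht0 : 0 ≤ ((i:ℝ)+1)/(n:ℝ) := by positivity
    have ht1 : ((i:ℝ)+1)/(n:ℝ) ≤ 1 := by rw [div_le_one (by linarith)]; linarith
    have hexp := one_sub_exp_ge ht0 ht1
    have hwlb : (((i:ℝ)+2) * ((i:ℝ)+1))⁻¹ ≤ w i := by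
      rw [hw]
      have h1 : ((i:ℝ)+1)*y+1 ≤ (i:ℝ)+2 := by nlinarith
      have h2 : ((i:ℝ))*y+1 ≤ (i:ℝ)+1 := by nlinarith
      have hp1 : (0:ℝ) < ((i:ℝ)+1)*y+1 := by positivity
      have hp2 : (0:ℝ) < ((i:ℝ))*y+1 := by positivity
      exact inv_anti₀ (by positivity)
        (mul_le_mul h1 h2 hp2.le (by positivity))
    have hfact : w i - u i = (1 - Real.exp (-((i:ℝ)+1)/(n:ℝ))) * w i := by
      rw [hu]; ring
    rw [hfact]
    have hge : (1 - Real.exp (-((i:ℝ)+1)/(n:ℝ))) ≥ ((i:ℝ)+1)/(n:ℝ)/2 := by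
      have : -(((i:ℝ)+1)/(n:ℝ)) = -((i:ℝ)+1)/(n:ℝ) := by ring
      rw [← this]
      exact hexp
    have h5 : ((i:ℝ)+1)/(n:ℝ)/2 * (((i:ℝ)+2) * ((i:ℝ)+1))⁻¹
        ≤ (1 - Real.exp (-((i:ℝ)+1)/(n:ℝ))) * w i := by
      apply mul_le_mul hge hwlb (by positivity)
      linarith
    have h6 : 1/(2*(n:ℝ)) * (((i:ℝ)+2)⁻¹) = ((i:ℝ)+1)/(n:ℝ)/2 * (((i:ℝ)+2) * ((i:ℝ)+1))⁻¹ := by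
      field_simp
    linarith [h5, h6.ge, h6.le]
  have hlog : ∀ i : ℕ, Real.log ((i:ℝ)+3) - Real.log ((i:ℝ)+2) ≤ ((i:ℝ)+2)⁻¹ := by
    intro i
    have h2 : (0:ℝ) < (i:ℝ)+2 := by positivity
    have h3 : (0:ℝ) < (i:ℝ)+3 := by positivity
    rw [← Real.log_div h3.ne' h2.ne']
    have := Real.log_le_sub_one_of_pos (show (0:ℝ) < ((i:ℝ)+3)/((i:ℝ)+2) by positivity)
    have he : ((i:ℝ)+3)/((i:ℝ)+2) - 1 = ((i:ℝ)+2)⁻¹ := by field_simp; norm_num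
    linarith
  have hsum_log : ∑ i ∈ Finset.range n, (Real.log ((i:ℝ)+3) - Real.log ((i:ℝ)+2))
      = Real.log ((n:ℝ)+2) - Real.log 2 := by
    have h := Finset.sum_range_sub (f := fun i : ℕ => Real.log ((i:ℝ)+2)) n
    push_cast at h
    calc ∑ i ∈ Finset.range n, (Real.log ((i:ℝ)+3) - Real.log ((i:ℝ)+2))
        = ∑ i ∈ Finset.range n, (Real.log (((i:ℝ)+1)+2) - Real.log ((i:ℝ)+2)) := by
          apply Finset.sum_congr rfl; intro i _; ring_nf
      _ = Real.log ((n:ℝ)+2) - Real.log ((0:ℝ)+2) := h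
      _ = Real.log ((n:ℝ)+2) - Real.log 2 := by norm_num
  -- defect sum lower bound
  have hdefect : (Real.log ((n:ℝ)+2) - Real.log 2)/(2*(n:ℝ)) ≤ ∑' i, (w i - u i) := by
    have h1 : ∑ i ∈ Finset.range n, (w i - u i) ≤ ∑' i, (w i - u i) :=
      Summable.sum_le_tsum _ (fun i _ => by linarith [hu_le_w i]) hwu_sum
    have h2 : ∑ i ∈ Finset.range n, (1/(2*(n:ℝ)) * (((i:ℝ)+2)⁻¹))
        ≤ ∑ i ∈ Finset.range n, (w i - u i) := by
      apply Finset.sum_le_sum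
      intro i hi
      exact hterm i (Finset.mem_range.1 hi)
    have h3 : (Real.log ((n:ℝ)+2) - Real.log 2)/(2*(n:ℝ))
        ≤ ∑ i ∈ Finset.range n, (1/(2*(n:ℝ)) * (((i:ℝ)+2)⁻¹)) := by
      have hterms : Real.log ((n:ℝ)+2) - Real.log 2 ≤ ∑ i ∈ Finset.range n, ((i:ℝ)+2)⁻¹ := by
        rw [← hsum_log]
        exact Finset.sum_le_sum fun i _ => hlog i
      rw [← Finset.mul_sum, div_eq_mul_inv, mul_comm, one_div]
      exact mul_le_mul_of_nonneg_left hterms (by positivity)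
    linarith
  have htsum_u : ∑' i, u i ≤ rho n * y⁻¹ := by
    have hdiff : ∑' i, (w i - u i) = y⁻¹ - ∑' i, u i := by
      rw [Summable.tsum_sub hw_sum hu_sum, (hasSum_w hy0).tsum_eq]
    have hyinv : y⁻¹ ≤ 2 := by
      rw [inv_le_comm₀ (by linarith) (by norm_num)]; linarith
    have hgap := rho_gap hn
    have hrho : 1 - rho n = (Real.log ((n:ℝ)+2) - Real.log 2)/(4*(n:ℝ)) := by rw [rho]; ring
    have hd2 : 2*(1 - rho n) ≤ ∑' i, (w i - u i) := by
      rw [hrho]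
      have : 2*((Real.log ((n:ℝ)+2) - Real.log 2)/(4*(n:ℝ)))
          = (Real.log ((n:ℝ)+2) - Real.log 2)/(2*(n:ℝ)) := by ring
      rw [this]
      exact hdefect
    have hrpos : 0 < 1 - rho n := by
      rw [hrho]; positivity
    nlinarith [hdiff, hd2, hyinv, hrpos]
  calc (∑' i : ℕ, ENNReal.ofReal (Real.exp (-((i:ℝ)+1)/(n:ℝ))) *
        ENNReal.ofReal ((((i:ℝ)+1)*y+1) * ((i:ℝ)*y+1))⁻¹)
      = ∑' i : ℕ, ENNReal.ofReal (u i) := by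
        apply tsum_congr
        intro i
        rw [hu, ← ENNReal.ofReal_mul (Real.exp_nonneg _)]
    _ = ENNReal.ofReal (∑' i, u i) :=
        (ENNReal.ofReal_tsum_of_nonneg hu_nonneg hu_sum).symm
    _ ≤ ENNReal.ofReal (rho n * y⁻¹) := ENNReal.ofReal_le_ofReal htsum_u
    _ = ENNReal.ofReal (rho n) * ENNReal.ofReal y⁻¹ :=
        ENNReal.ofReal_mul (rho_nonneg hn)

end Upper

section UpperChain

noncomputable def eexp (n : ℕ) : ℕ → ℝ → ℝ≥0∞
  | 0, _ => 1
  | m+1, x => ENNReal.ofReal (Real.exp (-((nphi x : ℝ))/(n:ℝ))) * eexp n m (fR x)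

lemma measurable_eexp (n m : ℕ) : Measurable (eexp n m) := by
  induction m with
  | zero => exact measurable_const
  | succ m ih =>
    exact ((measurable_nphiR.neg.div measurable_const).exp.ennreal_ofReal).mul
      (ih.comp measurable_fR)

lemma eexp_eq (n m : ℕ) (x : ℝ) :
    eexp n m x = ENNReal.ofReal (Real.exp (-((tau m x : ℝ))/(n:ℝ))) := by
  induction m generalizing x with
  | zero =>
    simp [eexp, tau]
  | succ m ih =>
    have htau : ((tau (m+1) x : ℕ) : ℝ) = (nphi x : ℝ) + (tau m (fR x) : ℝ) := by
      have : tau (m+1) x = nphi x + tau m (fR x) := rfl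
      rw [this]; push_cast; ring
    rw [show eexp n (m+1) x
        = ENNReal.ofReal (Real.exp (-((nphi x : ℝ))/(n:ℝ))) * eexp n m (fR x) from rfl,
      ih, ← ENNReal.ofReal_mul (Real.exp_nonneg _), ← Real.exp_add, htau]
    congr 2
    ring

lemma Phi_rec (n : ℕ) (hn : 1 ≤ n) (m : ℕ) :
    ∫⁻ x, eexp n (m+1) x ∂muG
      ≤ ENNReal.ofReal (rho n) * ∫⁻ x, eexp n m x ∂muG := by
  have ht := transfer (fun j => ENNReal.ofReal (Real.exp (-(j:ℝ)/(n:ℝ))))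
    (fun j => ENNReal.ofReal_ne_top) (eexp n m) (measurable_eexp n m)
  simp only [Nat.cast_add, Nat.cast_one] at ht
  have hLHS : ∫⁻ x, eexp n (m+1) x ∂muG
      = ∫⁻ x, ENNReal.ofReal (Real.exp (-((nphi x : ℝ))/(n:ℝ))) * eexp n m (fR x) ∂muG := rfl
  rw [hLHS, ht]
  calc ∫⁻ y in Gset, (∑' i : ℕ, ENNReal.ofReal (Real.exp (-((i:ℝ)+1)/(n:ℝ))) *
          ENNReal.ofReal ((((i:ℝ)+1)*y+1) * ((i:ℝ)*y+1))⁻¹) * eexp n m y ∂volume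
      ≤ ∫⁻ y in Gset, (ENNReal.ofReal (rho n) * ENNReal.ofReal y⁻¹) * eexp n m y ∂volume := by
        apply lintegral_mono_ae
        rw [ae_restrict_iff' measurableSet_Gset]
        apply ae_of_all
        intro y hy
        exact mul_le_mul_left (kernel_bound n hn hy.1) _
    _ = ENNReal.ofReal (rho n) * ∫⁻ y in Gset, ENNReal.ofReal y⁻¹ * eexp n m y ∂volume := by
        simp_rw [mul_assoc]
        rw [lintegral_const_mul' _ _ ENNReal.ofReal_ne_top]
    _ = ENNReal.ofReal (rho n) * ∫⁻ x, eexp n m x ∂muG := by rw [muG_lintegral]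

lemma Phi_le (n : ℕ) (hn : 1 ≤ n) (m : ℕ) :
    ∫⁻ x, eexp n m x ∂muG ≤ ENNReal.ofReal (rho n)^m * ENNReal.ofReal (Real.log 2) := by
  induction m with
  | zero =>
    simp only [eexp, pow_zero, one_mul, lintegral_one]
    rw [muG_univ]
  | succ m ih =>
    calc ∫⁻ x, eexp n (m+1) x ∂muG
        ≤ ENNReal.ofReal (rho n) * ∫⁻ x, eexp n m x ∂muG := Phi_rec n hn m
      _ ≤ ENNReal.ofReal (rho n) * (ENNReal.ofReal (rho n)^m * ENNReal.ofReal (Real.log 2)) :=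
          mul_le_mul_right ih _
      _ = ENNReal.ofReal (rho n)^(m+1) * ENNReal.ofReal (Real.log 2) := by
          rw [pow_succ]; ring

lemma event_le (n : ℕ) (hn : 1 ≤ n) (m : ℕ) :
    muG {x | tau m x ≤ n}
      ≤ ENNReal.ofReal (Real.exp 1) *
          (ENNReal.ofReal (rho n)^m * ENNReal.ofReal (Real.log 2)) := by
  have hmeas : MeasurableSet {x : ℝ | tau m x ≤ n} :=
    (measurable_tau m) measurableSet_Iic
  have hnR : (1:ℝ) ≤ (n:ℝ) := by exact_mod_cast hn
  have hpt : ∀ x ∈ {x : ℝ | tau m x ≤ n}, ENNReal.ofReal (Real.exp (-1)) ≤ eexp n m x := by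
    intro x hx
    rw [eexp_eq]
    apply ENNReal.ofReal_le_ofReal
    apply Real.exp_le_exp.2
    have hxle : ((tau m x : ℕ) : ℝ) ≤ (n:ℝ) := by exact_mod_cast hx
    have hdiv : ((tau m x : ℕ) : ℝ)/(n:ℝ) ≤ 1 := by
      rw [div_le_one (by linarith)]; exact hxle
    rw [neg_div]
    linarith
  have h1 : ENNReal.ofReal (Real.exp (-1)) * muG {x | tau m x ≤ n}
      ≤ ∫⁻ x, eexp n m x ∂muG := by
    have h2 : ∫⁻ x in {x | tau m x ≤ n}, ENNReal.ofReal (Real.exp (-1)) ∂muG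
        ≤ ∫⁻ x in {x | tau m x ≤ n}, eexp n m x ∂muG := by
      apply lintegral_mono_ae
      rw [ae_restrict_iff' hmeas]
      exact ae_of_all _ hpt
    rw [setLIntegral_const] at h2
    calc ENNReal.ofReal (Real.exp (-1)) * muG {x | tau m x ≤ n}
        ≤ ∫⁻ x in {x | tau m x ≤ n}, eexp n m x ∂muG := h2
      _ ≤ ∫⁻ x, eexp n m x ∂muG := setLIntegral_le_lintegral _ _
  have hmul : ENNReal.ofReal (Real.exp 1) * ENNReal.ofReal (Real.exp (-1)) = 1 := by
    rw [← ENNReal.ofReal_mul (Real.exp_nonneg _), ← Real.exp_add]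
    norm_num
  calc muG {x | tau m x ≤ n}
      = (ENNReal.ofReal (Real.exp 1) * ENNReal.ofReal (Real.exp (-1)))
          * muG {x | tau m x ≤ n} := by rw [hmul, one_mul]
    _ = ENNReal.ofReal (Real.exp 1)
          * (ENNReal.ofReal (Real.exp (-1)) * muG {x | tau m x ≤ n}) := by rw [mul_assoc]
    _ ≤ ENNReal.ofReal (Real.exp 1) * ∫⁻ x, eexp n m x ∂muG := mul_le_mul_right h1 _
    _ ≤ ENNReal.ofReal (Real.exp 1)
          * (ENNReal.ofReal (rho n)^m * ENNReal.ofReal (Real.log 2)) :=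
        mul_le_mul_right (Phi_le n hn m) _

lemma Sigma_upper (n : ℕ) (hn : 1 ≤ n) :
    ∑ m ∈ Finset.range (n+1), muG {x | tau m x ≤ n}
      ≤ ENNReal.ofReal
          (Real.exp 1 * Real.log 2 * ((4*(n:ℝ))/(Real.log ((n:ℝ)+2) - Real.log 2))) := by
  have hgap := rho_gap hn
  have hnR : (1:ℝ) ≤ (n:ℝ) := by exact_mod_cast hn
  calc ∑ m ∈ Finset.range (n+1), muG {x | tau m x ≤ n}
      ≤ ∑ m ∈ Finset.range (n+1), ENNReal.ofReal (Real.exp 1) *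
          (ENNReal.ofReal (rho n)^m * ENNReal.ofReal (Real.log 2)) :=
        Finset.sum_le_sum fun m _ => event_le n hn m
    _ = (ENNReal.ofReal (Real.exp 1) * ENNReal.ofReal (Real.log 2)) *
          ∑ m ∈ Finset.range (n+1), ENNReal.ofReal (rho n)^m := by
        rw [Finset.mul_sum]
        apply Finset.sum_congr rfl
        intro m _
        ring
    _ ≤ (ENNReal.ofReal (Real.exp 1) * ENNReal.ofReal (Real.log 2)) *
          ∑' m : ℕ, ENNReal.ofReal (rho n)^m :=
        mul_le_mul_right (ENNReal.sum_le_tsum _) _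
    _ = (ENNReal.ofReal (Real.exp 1) * ENNReal.ofReal (Real.log 2)) *
          (1 - ENNReal.ofReal (rho n))⁻¹ := by rw [ENNReal.tsum_geometric]
    _ ≤ ENNReal.ofReal
          (Real.exp 1 * Real.log 2 * ((4*(n:ℝ))/(Real.log ((n:ℝ)+2) - Real.log 2))) := by
        have h1 : (1 : ℝ≥0∞) - ENNReal.ofReal (rho n)
            = ENNReal.ofReal (1 - rho n) := by
          rw [ENNReal.ofReal_sub _ (rho_nonneg hn), ENNReal.ofReal_one]
        have h2 : (1 - rho n) = (Real.log ((n:ℝ)+2) - Real.log 2)/(4*(n:ℝ)) := by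
          rw [rho]; ring
        rw [h1, h2, ← ENNReal.ofReal_inv_of_pos (by positivity),
          ← ENNReal.ofReal_mul (Real.exp_nonneg _),
          ← ENNReal.ofReal_mul (by positivity)]
        apply ENNReal.ofReal_le_ofReal
        rw [inv_div]

end UpperChain

section LowerChain

noncomputable def sig (n : ℕ) : ℕ → ℝ → ℝ≥0∞
  | 0, _ => 0
  | m+1, x => ((min (nphi x) n : ℕ) : ℝ≥0∞) + sig n m (fR x)

lemma measurable_sig (n m : ℕ) : Measurable (sig n m) := by
  induction m with
  | zero => exact measurable_const
  | succ m ih =>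
    exact (Measurable.comp measurable_from_top (measurable_nphi.min measurable_const)).add
      (ih.comp measurable_fR)

lemma sig_ge (n m : ℕ) (x : ℝ) :
    ((min (tau m x) n : ℕ) : ℝ≥0∞) ≤ sig n m x := by
  induction m generalizing x with
  | zero => simp [tau, sig]
  | succ m ih =>
    have h1 : tau (m+1) x = nphi x + tau m (fR x) := rfl
    have h2 : sig n (m+1) x = ((min (nphi x) n : ℕ) : ℝ≥0∞) + sig n m (fR x) := rfl
    have h3 : min (tau (m+1) x) n ≤ min (nphi x) n + min (tau m (fR x)) n := by omega
    calc ((min (tau (m+1) x) n : ℕ) : ℝ≥0∞)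
        ≤ ((min (nphi x) n + min (tau m (fR x)) n : ℕ) : ℝ≥0∞) := by exact_mod_cast h3
      _ = ((min (nphi x) n : ℕ) : ℝ≥0∞) + ((min (tau m (fR x)) n : ℕ) : ℝ≥0∞) := by
          push_cast; ring
      _ ≤ ((min (nphi x) n : ℕ) : ℝ≥0∞) + sig n m (fR x) := add_le_add_right (ih (fR x)) _
      _ = sig n (m+1) x := h2.symm

lemma psi_int (n : ℕ) :
    ∫⁻ x, ((min (nphi x) n : ℕ) : ℝ≥0∞) ∂muG
      = ENNReal.ofReal (Real.log ((n:ℝ)+1)) := by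
  have hpt : ∀ x : ℝ, ((min (nphi x) n : ℕ) : ℝ≥0∞)
      = ∑ t ∈ Finset.range n, Set.indicator {x : ℝ | t+1 ≤ nphi x} (fun _ => 1) x := by
    intro x
    classical
    have hfilter : Finset.filter (fun t => t+1 ≤ nphi x) (Finset.range n)
        = Finset.range (min (nphi x) n) := by
      ext t
      simp only [Finset.mem_filter, Finset.mem_range, lt_min_iff]
      omega
    have : ∑ t ∈ Finset.range n, Set.indicator {x : ℝ | t+1 ≤ nphi x} (fun _ => (1:ℝ≥0∞)) x
        = ∑ t ∈ Finset.range n, if t+1 ≤ nphi x then (1:ℝ≥0∞) else 0 := by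
      apply Finset.sum_congr rfl
      intro t _
      simp [Set.indicator_apply]
    rw [this, Finset.sum_boole, hfilter, Finset.card_range]
  simp_rw [hpt]
  rw [lintegral_finset_sum _ (fun t _ =>
    (measurable_const.indicator (measurableSet_nphi_ge (t+1))))]
  have hterm : ∀ t ∈ Finset.range n, ∫⁻ x, Set.indicator {x : ℝ | t+1 ≤ nphi x} (fun _ => (1:ℝ≥0∞)) x ∂muG
      = ENNReal.ofReal (Real.log ((t:ℝ)+2) - Real.log ((t:ℝ)+1)) := by
    intro t _
    rw [lintegral_indicator (measurableSet_nphi_ge (t+1)), setLIntegral_one,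
      muG_nphi_ge (t+1) (by omega)]
    push_cast
    ring_nf
  rw [Finset.sum_congr rfl hterm, ← ENNReal.ofReal_sum_of_nonneg]
  · congr 1
    have h := Finset.sum_range_sub (f := fun t : ℕ => Real.log ((t:ℝ)+1)) n
    push_cast at h
    calc ∑ t ∈ Finset.range n, (Real.log ((t:ℝ)+2) - Real.log ((t:ℝ)+1))
        = ∑ t ∈ Finset.range n, (Real.log (((t:ℝ)+1)+1) - Real.log ((t:ℝ)+1)) := by
          apply Finset.sum_congr rfl; intro t _; ring_nf
      _ = Real.log ((n:ℝ)+1) - Real.log ((0:ℝ)+1) := h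
      _ = Real.log ((n:ℝ)+1) := by norm_num
  · intro t _
    have h1 : ((t:ℝ)+1) ≤ ((t:ℝ)+2) := by linarith
    have := Real.log_le_log (by positivity) h1
    linarith

lemma sig_int (n m : ℕ) :
    ∫⁻ x, sig n m x ∂muG = (m : ℝ≥0∞) * ENNReal.ofReal (Real.log ((n:ℝ)+1)) := by
  induction m with
  | zero => simp [sig]
  | succ m ih =>
    have h2 : ∀ x, sig n (m+1) x = ((min (nphi x) n : ℕ) : ℝ≥0∞) + sig n m (fR x) :=
      fun x => rfl
    simp_rw [h2]
    rw [lintegral_add_left (show Measurable fun x : ℝ => ((min (nphi x) n : ℕ) : ℝ≥0∞) from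
      measurable_from_top.comp (measurable_nphi.min measurable_const)), psi_int n,
      invariance (sig n m) (measurable_sig n m), ih]
    push_cast
    ring

lemma tail_small (n : ℕ) (hn : 1 ≤ n) (m : ℕ)
    (hm : (m:ℝ) * Real.log ((n:ℝ)+1) ≤ (n:ℝ)/8) :
    muG {x | n < tau m x} ≤ ENNReal.ofReal (1/8) := by
  have hn0 : ((n:ℝ≥0∞)) ≠ 0 := by
    simp only [ne_eq, Nat.cast_eq_zero]; omega
  have hntop : ((n:ℝ≥0∞)) ≠ ⊤ := ENNReal.natCast_ne_top n
  have hsub : {x : ℝ | n < tau m x} ⊆ {x : ℝ | (n:ℝ≥0∞) ≤ sig n m x} := by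
    intro x hx
    have h1 : min (tau m x) n = n := by
      simp only [Set.mem_setOf_eq] at hx; omega
    have := sig_ge n m x
    rw [h1] at this
    exact this
  have hmark := mul_meas_ge_le_lintegral₀ (μ := muG) (measurable_sig n m).aemeasurable
    ((n : ℝ≥0∞))
  rw [sig_int n m] at hmark
  have hchain : (n:ℝ≥0∞) * muG {x | n < tau m x} ≤ (n:ℝ≥0∞) * ENNReal.ofReal (1/8) := by
    calc (n:ℝ≥0∞) * muG {x | n < tau m x}
        ≤ (n:ℝ≥0∞) * muG {x | (n:ℝ≥0∞) ≤ sig n m x} :=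
          mul_le_mul_right (measure_mono hsub) _
      _ ≤ (m : ℝ≥0∞) * ENNReal.ofReal (Real.log ((n:ℝ)+1)) := hmark
      _ ≤ ENNReal.ofReal ((n:ℝ)/8) := by
          rw [← ENNReal.ofReal_natCast m, ← ENNReal.ofReal_mul (by positivity)]
          apply ENNReal.ofReal_le_ofReal hm
      _ = (n:ℝ≥0∞) * ENNReal.ofReal (1/8) := by
          rw [← ENNReal.ofReal_natCast n, ← ENNReal.ofReal_mul (by positivity)]
          congr 1
          ring
  exact (ENNReal.mul_le_mul_iff_right hn0 hntop).1 hchain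

lemma event_ge (n : ℕ) (hn : 1 ≤ n) (m : ℕ)
    (hm : (m:ℝ) * Real.log ((n:ℝ)+1) ≤ (n:ℝ)/8) :
    ENNReal.ofReal (1/2) ≤ muG {x | tau m x ≤ n} := by
  have hcover : (Set.univ : Set ℝ) = {x | tau m x ≤ n} ∪ {x | n < tau m x} := by
    ext x
    simp only [Set.mem_union, Set.mem_setOf_eq, Set.mem_univ, true_iff]
    omega
  have h1 : muG Set.univ ≤ muG {x | tau m x ≤ n} + muG {x | n < tau m x} := by
    rw [hcover]; exact measure_union_le _ _
  rw [muG_univ] at h1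
  have h2 := tail_small n hn m hm
  have h3 : ENNReal.ofReal (Real.log 2) - ENNReal.ofReal (1/8) ≤ muG {x | tau m x ≤ n} := by
    apply tsub_le_iff_right.2
    calc ENNReal.ofReal (Real.log 2)
        ≤ muG {x | tau m x ≤ n} + muG {x | n < tau m x} := h1
      _ ≤ muG {x | tau m x ≤ n} + ENNReal.ofReal (1/8) := add_le_add_right h2 _
  calc ENNReal.ofReal (1/2)
      ≤ ENNReal.ofReal (Real.log 2) - ENNReal.ofReal (1/8) := by
        rw [← ENNReal.ofReal_sub _ (by norm_num)]
        apply ENNReal.ofReal_le_ofReal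
        have := Real.log_two_gt_d9
        norm_num
        linarith
    _ ≤ muG {x | tau m x ≤ n} := h3

end LowerChain

section Assembly

lemma measurable_fareyMap : Measurable fareyMap := by
  apply Measurable.ite (measurableSet_le measurable_id measurable_const)
  · exact measurable_id.div (measurable_const.sub measurable_id)
  · exact (measurable_const.sub measurable_id).div measurable_id

lemma measurable_pre (k : ℕ) :
    MeasurableSet ((fareyMap^[k]) ⁻¹' Set.Icc (1/2:ℝ) 1) :=
  (measurable_fareyMap.iterate k) measurableSet_Icc

lemma fareyMeasure_inter (k : ℕ) :
    fareyMeasure (Set.Icc (1/2:ℝ) 1 ∩ (fareyMap^[k]) ⁻¹' Set.Icc (1/2:ℝ) 1)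
      = muG ((fareyMap^[k]) ⁻¹' Set.Icc (1/2:ℝ) 1) := by
  have hmg : muG ((fareyMap^[k]) ⁻¹' Set.Icc (1/2:ℝ) 1)
      = fareyMeasure ((fareyMap^[k]) ⁻¹' Set.Icc (1/2:ℝ) 1 ∩ Gset) :=
    Measure.restrict_apply (measurable_pre k)
  rw [hmg]
  apply le_antisymm
  · have hsub : Set.Icc (1/2:ℝ) 1 ∩ (fareyMap^[k]) ⁻¹' Set.Icc (1/2:ℝ) 1
        ⊆ ((fareyMap^[k]) ⁻¹' Set.Icc (1/2:ℝ) 1 ∩ Gset) ∪ QS := by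
      rintro x ⟨hxD, hxp⟩
      by_cases hq : x ∈ QS
      · exact Or.inr hq
      · left
        have hx12 : x ≠ 1/2 := by
          rintro rfl; exact hq ⟨1/2, by norm_num⟩
        have hx1 : x ≠ 1 := by
          rintro rfl; exact hq ⟨1, by norm_num⟩
        exact ⟨hxp, ⟨⟨lt_of_le_of_ne hxD.1 (Ne.symm hx12), lt_of_le_of_ne hxD.2 hx1⟩, hq⟩⟩
    calc fareyMeasure (Set.Icc (1/2:ℝ) 1 ∩ (fareyMap^[k]) ⁻¹' Set.Icc (1/2:ℝ) 1)
        ≤ fareyMeasure ((fareyMap^[k]) ⁻¹' Set.Icc (1/2:ℝ) 1 ∩ Gset) + fareyMeasure QS :=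
          le_trans (measure_mono hsub) (measure_union_le _ _)
      _ = fareyMeasure ((fareyMap^[k]) ⁻¹' Set.Icc (1/2:ℝ) 1 ∩ Gset) := by
          rw [fareyMeasure_ac volume_QS, add_zero]
  · apply measure_mono
    rintro x ⟨hxp, hxG⟩
    exact ⟨⟨le_of_lt hxG.1.1, le_of_lt hxG.1.2⟩, hxp⟩

open Classical in
lemma sum_eq_Sigma (n : ℕ) :
    ∑ k ∈ Finset.range (n+1),
      fareyMeasure (Set.Icc (1/2:ℝ) 1 ∩ (fareyMap^[k]) ⁻¹' Set.Icc (1/2:ℝ) 1)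
      = ∑ m ∈ Finset.range (n+1), muG {x | tau m x ≤ n} := by
  have h1 : ∀ k : ℕ, muG ((fareyMap^[k]) ⁻¹' Set.Icc (1/2:ℝ) 1)
      = ∫⁻ x, (if fareyMap^[k] x ∈ Set.Icc (1/2:ℝ) 1 then (1:ℝ≥0∞) else 0) ∂muG := by
    intro k
    rw [← lintegral_indicator_one (measurable_pre k)]
    apply lintegral_congr
    intro x
    simp [Set.indicator_apply, Set.mem_preimage]
  have h2 : ∀ m : ℕ, muG {x : ℝ | tau m x ≤ n}
      = ∫⁻ x, (if tau m x ≤ n then (1:ℝ≥0∞) else 0) ∂muG := by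
    intro m
    have hms : MeasurableSet {x : ℝ | tau m x ≤ n} := (measurable_tau m) measurableSet_Iic
    rw [← lintegral_indicator_one hms]
    apply lintegral_congr
    intro x
    simp [Set.indicator_apply]
  calc ∑ k ∈ Finset.range (n+1),
        fareyMeasure (Set.Icc (1/2:ℝ) 1 ∩ (fareyMap^[k]) ⁻¹' Set.Icc (1/2:ℝ) 1)
      = ∑ k ∈ Finset.range (n+1),
          ∫⁻ x, (if fareyMap^[k] x ∈ Set.Icc (1/2:ℝ) 1 then (1:ℝ≥0∞) else 0) ∂muG := by
        apply Finset.sum_congr rfl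
        intro k _
        rw [fareyMeasure_inter k, h1 k]
    _ = ∫⁻ x, ∑ k ∈ Finset.range (n+1),
          (if fareyMap^[k] x ∈ Set.Icc (1/2:ℝ) 1 then (1:ℝ≥0∞) else 0) ∂muG := by
        rw [lintegral_finset_sum]
        intro k _
        exact Measurable.ite ((measurable_fareyMap.iterate k) measurableSet_Icc)
          measurable_const measurable_const
    _ = ∫⁻ x, ∑ m ∈ Finset.range (n+1),
          (if tau m x ≤ n then (1:ℝ≥0∞) else 0) ∂muG := by
        apply lintegral_congr_ae
        have hae : ∀ᵐ x ∂muG, x ∈ Gset := ae_restrict_mem measurableSet_Gset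
        filter_upwards [hae] with x hx
        exact count_eq hx n
    _ = ∑ m ∈ Finset.range (n+1),
          ∫⁻ x, (if tau m x ≤ n then (1:ℝ≥0∞) else 0) ∂muG := by
        rw [lintegral_finset_sum]
        intro m _
        exact Measurable.ite ((measurable_tau m) measurableSet_Iic)
          measurable_const measurable_const
    _ = ∑ m ∈ Finset.range (n+1), muG {x | tau m x ≤ n} := by
        apply Finset.sum_congr rfl
        intro m _
        rw [h2 m]

lemma upper_real (n : ℕ) (hn : 2 ≤ n) :
    Real.exp 1 * Real.log 2 * ((4*(n:ℝ))/(Real.log ((n:ℝ)+2) - Real.log 2))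
      ≤ (16 * Real.exp 1 * Real.log 2) * ((n:ℝ)/Real.log n) := by
  have hnR : (2:ℝ) ≤ (n:ℝ) := by exact_mod_cast hn
  have hLn : 0 < Real.log n := Real.log_pos (by linarith)
  have hL2 : 0 < Real.log ((n:ℝ)+2) - Real.log 2 := rho_gap (by omega)
  have hkey : Real.log (n:ℝ) ≤ 4 * (Real.log ((n:ℝ)+2) - Real.log 2) := by
    have h1 : Real.log ((n:ℝ)+2) - Real.log 2 = Real.log (((n:ℝ)+2)/2) := by
      rw [Real.log_div (by linarith) (by norm_num)]
    have h2 : (4:ℝ) * Real.log (((n:ℝ)+2)/2) = Real.log ((((n:ℝ)+2)/2)^4) := by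
      rw [Real.log_pow]; push_cast; ring
    rw [h1, h2]
    apply Real.log_le_log (by linarith)
    rw [div_pow, le_div_iff₀ (by norm_num)]
    have e2 : ((n:ℝ)+2)^2 ≥ 4*(n:ℝ) := by nlinarith
    have e3 : ((n:ℝ)+2)^2 ≥ 4 := by nlinarith
    have e4 : (((n:ℝ)+2)^2) * (((n:ℝ)+2)^2) ≥ (4*(n:ℝ)) * 4 := by nlinarith
    nlinarith [e4]
  have hfrac : (4*(n:ℝ))/(Real.log ((n:ℝ)+2) - Real.log 2) ≤ (16*(n:ℝ))/Real.log n := by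
    rw [div_le_div_iff₀ hL2 hLn]
    nlinarith [hkey, hnR, hLn]
  have hel : (0:ℝ) ≤ Real.exp 1 * Real.log 2 :=
    mul_nonneg (Real.exp_nonneg _) (Real.log_nonneg one_le_two)
  calc Real.exp 1 * Real.log 2 * ((4*(n:ℝ))/(Real.log ((n:ℝ)+2) - Real.log 2))
      ≤ Real.exp 1 * Real.log 2 * ((16*(n:ℝ))/Real.log n) :=
        mul_le_mul_of_nonneg_left hfrac hel
    _ = (16 * Real.exp 1 * Real.log 2) * ((n:ℝ)/Real.log n) := by ring

lemma Sigma_lower (n : ℕ) (hn : 2 ≤ n) :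
    ENNReal.ofReal ((1/32) * ((n:ℝ)/Real.log n))
      ≤ ∑ m ∈ Finset.range (n+1), muG {x | tau m x ≤ n} := by
  have hnR : (2:ℝ) ≤ (n:ℝ) := by exact_mod_cast hn
  have hLn : 0 < Real.log n := Real.log_pos (by linarith)
  have hL : (1:ℝ) ≤ Real.log ((n:ℝ)+1) := by
    rw [Real.le_log_iff_exp_le (by linarith)]
    have := Real.exp_one_lt_d9
    linarith
  have hLpos : (0:ℝ) < Real.log ((n:ℝ)+1) := by linarith
  set M := ⌊(n:ℝ)/(8 * Real.log ((n:ℝ)+1))⌋₊ with hM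
  have hMle : (M:ℝ) ≤ (n:ℝ)/(8*Real.log ((n:ℝ)+1)) := Nat.floor_le (by positivity)
  have hMn : M ≤ n := by
    have h1 : (n:ℝ)/(8*Real.log ((n:ℝ)+1)) ≤ (n:ℝ) := by
      rw [div_le_iff₀ (by positivity)]; nlinarith
    have h2 : (M:ℝ) ≤ (n:ℝ) := le_trans hMle h1
    exact_mod_cast h2
  have hev : ∀ m ∈ Finset.range (M+1), ENNReal.ofReal (1/2) ≤ muG {x | tau m x ≤ n} := by
    intro m hm
    apply event_ge n (by omega) m
    have hmM : (m:ℝ) ≤ (M:ℝ) := by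
      exact_mod_cast Nat.lt_succ_iff.1 (Finset.mem_range.1 hm)
    calc (m:ℝ) * Real.log ((n:ℝ)+1)
        ≤ ((n:ℝ)/(8*Real.log ((n:ℝ)+1))) * Real.log ((n:ℝ)+1) :=
          mul_le_mul_of_nonneg_right (le_trans hmM hMle) hLpos.le
      _ = (n:ℝ)/8 := by field_simp
  have hfloor : ENNReal.ofReal ((1/32) * ((n:ℝ)/Real.log n))
      ≤ ((M+1 : ℕ) : ℝ≥0∞) * ENNReal.ofReal (1/2) := by
    rw [← ENNReal.ofReal_natCast (M+1), ← ENNReal.ofReal_mul (by positivity)]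
    apply ENNReal.ofReal_le_ofReal
    have hlt : (n:ℝ)/(8*Real.log ((n:ℝ)+1)) < (M:ℝ)+1 := Nat.lt_floor_add_one _
    have hlog2 : Real.log ((n:ℝ)+1) ≤ 2 * Real.log n := by
      have h1 : Real.log ((n:ℝ)+1) ≤ Real.log ((n:ℝ)^2) := by
        apply Real.log_le_log (by linarith)
        nlinarith
      rw [Real.log_pow] at h1
      push_cast at h1
      linarith
    have h3 : (n:ℝ)/(16*Real.log n) ≤ (n:ℝ)/(8*Real.log ((n:ℝ)+1)) := by
      apply div_le_div_of_nonneg_left (by linarith) (by positivity)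
      linarith
    have hcast : ((M+1 : ℕ):ℝ) = (M:ℝ)+1 := by push_cast; ring
    rw [hcast]
    have hA : (n:ℝ)/(16*Real.log n) = ((n:ℝ)/Real.log n)/16 := by
      rw [div_div, mul_comm]
    have h5 : ((n:ℝ)/Real.log n)/16 ≤ (M:ℝ)+1 := by
      rw [← hA]; exact le_trans h3 hlt.le
    linarith
  calc ENNReal.ofReal ((1/32) * ((n:ℝ)/Real.log n))
      ≤ ((M+1 : ℕ) : ℝ≥0∞) * ENNReal.ofReal (1/2) := hfloor
    _ = ∑ _m ∈ Finset.range (M+1), ENNReal.ofReal (1/2) := by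
        rw [Finset.sum_const, Finset.card_range, nsmul_eq_mul]
    _ ≤ ∑ m ∈ Finset.range (M+1), muG {x | tau m x ≤ n} := Finset.sum_le_sum hev
    _ ≤ ∑ m ∈ Finset.range (n+1), muG {x | tau m x ≤ n} :=
        Finset.sum_le_sum_of_subset (Finset.range_subset_range.2 (by omega))

end Assembly






end FareyProof

/-- For the Farey map with its infinite invariant measure and `D = [1/2,1]`,
the correlation sums satisfy `∑_{k=0}^{n} μ(D ∩ F^{-k}(D)) ≍ n / log n`. -/
theorem fareyMap_correlation_sums_asymp :
    ∃ c C : ℝ, 0 < c ∧ c ≤ C ∧ ∀ n : ℕ, 2 ≤ n →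
      c * ((n : ℝ) / Real.log n) ≤
        (∑ k ∈ Finset.range (n + 1),
          (fareyMeasure (Set.Icc (1 / 2 : ℝ) 1 ∩
            (fareyMap^[k]) ⁻¹' Set.Icc (1 / 2 : ℝ) 1)).toReal) ∧
      (∑ k ∈ Finset.range (n + 1),
          (fareyMeasure (Set.Icc (1 / 2 : ℝ) 1 ∩
            (fareyMap^[k]) ⁻¹' Set.Icc (1 / 2 : ℝ) 1)).toReal) ≤
        C * ((n : ℝ) / Real.log n) := by
  classical
  refine ⟨1/32, 16 * Real.exp 1 * Real.log 2, by norm_num, ?_, ?_⟩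
  · nlinarith [Real.exp_one_gt_d9, Real.log_two_gt_d9]
  intro n hn
  have hfin : ∀ k ∈ Finset.range (n+1),
      fareyMeasure (Set.Icc (1/2:ℝ) 1 ∩ (fareyMap^[k]) ⁻¹' Set.Icc (1/2:ℝ) 1) ≠ ⊤ := by
    intro k _
    rw [FareyProof.fareyMeasure_inter k]
    exact ne_top_of_le_ne_top (by simp) FareyProof.muG_fin
  have hSn : (∑ k ∈ Finset.range (n + 1),
      (fareyMeasure (Set.Icc (1 / 2 : ℝ) 1 ∩
        (fareyMap^[k]) ⁻¹' Set.Icc (1 / 2 : ℝ) 1)).toReal)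
      = (∑ m ∈ Finset.range (n+1), FareyProof.muG {x | FareyProof.tau m x ≤ n}).toReal := by
    rw [← ENNReal.toReal_sum hfin, FareyProof.sum_eq_Sigma n]
  have hT_ne : (∑ m ∈ Finset.range (n+1), FareyProof.muG {x | FareyProof.tau m x ≤ n}) ≠ ⊤ := by
    apply ne_of_lt
    apply ENNReal.sum_lt_top.2
    intro m _
    exact lt_of_le_of_lt FareyProof.muG_fin ENNReal.ofReal_lt_top
  have hnR : (2:ℝ) ≤ (n:ℝ) := by exact_mod_cast hn
  have hLn : 0 < Real.log n := Real.log_pos (by linarith)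
  constructor
  · rw [hSn]
    have h1 := FareyProof.Sigma_lower n hn
    have h2 := ENNReal.toReal_mono hT_ne h1
    rwa [ENNReal.toReal_ofReal (by positivity)] at h2
  · rw [hSn]
    have h1 := FareyProof.Sigma_upper n (by omega)
    have h2 : (∑ m ∈ Finset.range (n+1),
        FareyProof.muG {x | FareyProof.tau m x ≤ n}).toReal
        ≤ Real.exp 1 * Real.log 2 *
            ((4*(n:ℝ))/(Real.log ((n:ℝ)+2) - Real.log 2)) := by
      apply ENNReal.toReal_le_of_le_ofReal ?_ h1
      have hgap := FareyProof.rho_gap (n := n) (by omega)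
      have hel : (0:ℝ) ≤ Real.exp 1 * Real.log 2 :=
        mul_nonneg (Real.exp_nonneg _) (Real.log_nonneg one_le_two)
      positivity
    linarith [FareyProof.upper_real n hn, h2]
end
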